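/- arXiv:1109.6702 — 2 statements merged into one kernel-verified Lean document; each statement's English description precedes it below -/
import Mathlib

section
/- Let λ be a k-strict partition of length ℓ, let p be any integer, and let Ψ = ∏_{j=2}^{ℓ+1} (1−R_{1j})/(1+R_{1j}). Suppose that ∑_ν a_ν w_ν = ∑_ν b_ν w_ν holds in the ring C^{(k)}, where the sums are over integer vectors ν = (ν_1,…,ν_ℓ) and a_ν, b_ν are integers only finitely many of which are nonzero. Then ∑_ν a_ν Ψ w_{(p,ν)} = ∑_ν b_ν Ψ w_{(p,ν)} holds in C^{(k)}. -/
set_option maxHeartbeats 1000000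
set_option synthInstance.maxHeartbeats 400000


noncomputable section
open scoped Classical

namespace EtaP

/-! ### Raising operator formalism.
An integer sequence is `α : ℕ → ℤ` (0-indexed; the paper's `α_i` is `α (i-1)`).
A raising-operator monomial is `n : (ℕ × ℕ) →₀ ℕ`, where `n (i,j)` is the exponent of
`R_{i+1,j+1}`.  `net n m` is the total change of the `m`-th entry. -/

def net (n : (ℕ × ℕ) →₀ ℕ) (m : ℕ) : ℤ :=
  (∑ᶠ j : ℕ, (n (m, j) : ℤ)) - ∑ᶠ i : ℕ, (n (i, m) : ℤ)

/-- The coefficient of the raising-operator monomial `n` in the formal power series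
`∏_{p ∈ Dfull} (1-R_p)(1+R_p)⁻¹ · ∏_{p ∈ Done} (1-R_p)`. -/
def rcoeff (Dfull Done : Set (ℕ × ℕ)) (n : (ℕ × ℕ) →₀ ℕ) : ℤ :=
  ∏ᶠ p : ℕ × ℕ,
    if p ∈ Dfull then (if n p = 0 then 1 else 2 * (-1 : ℤ) ^ (n p))
    else if p ∈ Done then (if n p = 0 then 1 else if n p = 1 then -1 else 0)
    else (if n p = 0 then 1 else 0)

/-- Apply the raising operator series determined by `Dfull`, `Done` to the
monomial `f_α = ∏_m f (α m)`, where `f : ℤ → R` satisfies `f 0 = 1`, `f r = 0` for `r < 0`. -/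
def RApply {R : Type} [CommRing R] (Dfull Done : Set (ℕ × ℕ)) (f : ℤ → R) (α : ℕ → ℤ) : R :=
  ∑ᶠ n : (ℕ × ℕ) →₀ ℕ, rcoeff Dfull Done n • ∏ᶠ m : ℕ, f (α m + net n m)

/-- The set of all pairs `i < j` (upper triangle). -/
def UT : Set (ℕ × ℕ) := {p | p.1 < p.2}

/-! ### Partitions.
A partition is a finitely supported antitone `ℕ →₀ ℕ`; `μ i` is the part `μ_{i+1}`. -/

/-- `|μ|`, the sum of the parts. -/
def sz (μ : ℕ →₀ ℕ) : ℕ := μ.sum fun _ v => v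

/-- `ℓ(μ)`, the number of nonzero parts. -/
def plen (μ : ℕ →₀ ℕ) : ℕ := μ.support.card

/-- `ℓ_k(μ)`, the number of parts `> k`. -/
def lenk (k : ℕ) (μ : ℕ →₀ ℕ) : ℕ := (μ.support.filter fun i => k < μ i).card

/-- the number of boxes of `μ` in column `c` (for `c ≥ 1`). -/
def colHt (μ : ℕ →₀ ℕ) (c : ℕ) : ℕ := (μ.support.filter fun i => c ≤ μ i).card

/-- `μ` has positive type: some part equals `k`. -/
def posType (k : ℕ) (μ : ℕ →₀ ℕ) : Prop := ∃ i, μ i = k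

def IsPartn (ν : ℕ →₀ ℕ) : Prop := ∀ i j, i ≤ j → ν j ≤ ν i

/-- A `k`-strict partition: parts greater than `k` are distinct. -/
structure KStrict (k : ℕ) where
  p : ℕ →₀ ℕ
  mono : ∀ i j, i ≤ j → p j ≤ p i
  strict : ∀ i, p i = p (i + 1) → p i ≤ k

/-- A typed `k`-strict partition. -/
structure TypedKS (k : ℕ) where
  p : ℕ →₀ ℕ
  mono : ∀ i j, i ≤ j → p j ≤ p i
  strict : ∀ i, p i = p (i + 1) → p i ≤ k
  t : ℕ
  t_le : t ≤ 2
  t_pos : t ≠ 0 ↔ ∃ i, p i = k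

/-! ### Young diagrams.  A box is a pair `(row, column)`, with rows and columns 1-indexed. -/

/-- `b` is a box of the Young diagram of `μ`. -/
def InDiag (μ : ℕ →₀ ℕ) (b : ℕ × ℕ) : Prop := 1 ≤ b.1 ∧ 1 ≤ b.2 ∧ b.2 ≤ μ (b.1 - 1)

/-- `b` is a box of the Young diagram of `μ`, with the convention that all boxes
`[0,c]` in row zero are included. -/
def InDiag0 (μ : ℕ →₀ ℕ) (b : ℕ × ℕ) : Prop := 1 ≤ b.2 ∧ (b.1 = 0 ∨ InDiag μ b)

/-- The boxes of `lam` that are not boxes of `mu`. -/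
def SkewBox (lam mu : ℕ →₀ ℕ) : Set (ℕ × ℕ) := {b | InDiag lam b ∧ ¬ InDiag mu b}

/-- `b`, `b'` are `k'`-related: `b = [r,c]`, `b' = [r',c']` with `c ≤ k < c'` and
`c + c' = 2k + 1 + r - r'`. -/
def KRel (k : ℕ) (b b' : ℕ × ℕ) : Prop :=
  b.2 ≤ k ∧ k < b'.2 ∧ b.2 + b'.2 + b'.1 = 2 * k + 1 + b.1

/-- `b`, `b'` are `k''`-related: `|c-k| + r = |c'-k| + r'`. -/
def KppRel (k : ℕ) (b b' : ℕ × ℕ) : Prop :=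
  ((b.2 : ℤ) - k).natAbs + b.1 = ((b'.2 : ℤ) - k).natAbs + b'.1

/-- Two boxes are adjacent when they share at least a vertex. -/
def AdjBox (b b' : ℕ × ℕ) : Prop :=
  b.1 ≤ b'.1 + 1 ∧ b'.1 ≤ b.1 + 1 ∧ b.2 ≤ b'.2 + 1 ∧ b'.2 ≤ b.2 + 1

/-- The number of connected components of a set of boxes (boxes are connected when they
share at least a vertex). -/
def ncomp (S : Set (ℕ × ℕ)) : ℕ := Nat.card (Quot fun a b : S => AdjBox a.1 b.1)

/-! ### The Pieri relation `λ → μ` and `k'`-horizontal strips. -/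

/-- The relation `λ → μ`:  `μ` is obtained from `λ` by removing a vertical strip from the
first `k` columns and adding a horizontal strip to the result, subject to the conditions
(1) and (2) on `k'`-related boxes. -/
def Arrow (k : ℕ) (lam mu : ℕ →₀ ℕ) : Prop :=
  (∃ ν : ℕ →₀ ℕ, IsPartn ν ∧
    (∀ i, ν i ≤ lam i) ∧ (∀ i, lam i ≤ ν i + 1) ∧ (∀ i, ν i < lam i → lam i ≤ k) ∧
    (∀ i, ν i ≤ mu i) ∧ (∀ i, mu (i + 1) ≤ ν i)) ∧
  (∀ c, 1 ≤ c → c ≤ k →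
    (colHt mu c = colHt lam c →
      ∀ b b', b ∈ SkewBox mu lam → b' ∈ SkewBox mu lam →
        KRel k (colHt lam c, c) b → KRel k (colHt lam c, c) b' → b = b') ∧
    (colHt mu c < colHt lam c →
      ∃ R, ∀ r, colHt mu c ≤ r → r ≤ colHt lam c →
        (∃! b, b ∈ SkewBox mu lam ∧ KRel k (r, c) b) ∧
        (∀ b ∈ SkewBox mu lam, KRel k (r, c) b → b.1 = R)))

/-- A box of `μ ∖ λ` is mentioned in conditions (1), (2) of the Pieri relation. -/
def Mentioned (k : ℕ) (lam mu : ℕ →₀ ℕ) (b : ℕ × ℕ) : Prop :=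
  ∃ c, 1 ≤ c ∧ c ≤ k ∧ ∃ r, colHt mu c ≤ r ∧ r ≤ colHt lam c ∧ KRel k (r, c) b

/-- The set `A` of boxes of `μ ∖ λ` in columns `> k` not mentioned in (1) or (2). -/
def APieri (k : ℕ) (lam mu : ℕ →₀ ℕ) : Set (ℕ × ℕ) :=
  {b | b ∈ SkewBox mu lam ∧ k < b.2 ∧ ¬ Mentioned k lam mu b}

def NPieri (k : ℕ) (lam mu : ℕ →₀ ℕ) : ℕ := ncomp (APieri k lam mu)

def MPieri (k : ℕ) (lam mu : ℕ →₀ ℕ) : ℤ :=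
  (lenk k lam : ℤ) - lenk k mu + NPieri k lam mu +
    (if posType k lam ∧ ¬ posType k mu then 1 else 0)

/-- `(a, μ)`: prepend the part `a` to `μ`. -/
def prepend (a : ℕ) (mu : ℕ →₀ ℕ) : ℕ →₀ ℕ :=
  Finsupp.single 0 a + mu.embDomain ⟨Nat.succ, Nat.succ_injective⟩

def stripBound (k : ℕ) (lam : ℕ →₀ ℕ) : ℕ := max (lam 0 + 1) (plen lam + 2 * k - 1)

/-- `μ ⇒ λ` : `λ/μ` is a `k'`-horizontal strip. -/
def HStrip (k : ℕ) (mu lam : ℕ →₀ ℕ) : Prop :=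
  (∀ i, mu i ≤ lam i) ∧
  ∀ q, stripBound k lam ≤ q → Arrow k lam (prepend (q + (sz lam - sz mu)) mu)

/-- `m(λ/μ) := M(λ, (p + r, μ))`. -/
def mstrip (k : ℕ) (mu lam : ℕ →₀ ℕ) : ℤ :=
  MPieri k lam (prepend (stripBound k lam + (sz lam - sz mu)) mu)

/-- `n̂(λ/μ) = ℓ_k(μ) - ℓ_k(λ) + m(λ/μ)`. -/
def hatn (k : ℕ) (mu lam : ℕ →₀ ℕ) : ℤ :=
  (lenk k mu : ℤ) - lenk k lam + mstrip k mu lam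

/-! ### The sets `R` and `A` attached to a `k'`-horizontal strip `λ/μ`. -/

/-- Left boxes (columns `≤ k`) of `λ/μ`. -/
def LeftSkew (k : ℕ) (lam mu : ℕ →₀ ℕ) : Set (ℕ × ℕ) := {b | b ∈ SkewBox lam mu ∧ b.2 ≤ k}

/-- The set `R`: right boxes of `μ` (including row zero) which are bottom boxes of `λ` in
their column and are `k''`-related to a left box of `λ/μ`. -/
def RsetD (k : ℕ) (lam mu : ℕ →₀ ℕ) : Set (ℕ × ℕ) :=
  {b | k < b.2 ∧ InDiag0 mu b ∧ b.1 = colHt lam b.2 ∧ ∃ b' ∈ LeftSkew k lam mu, KppRel k b b'}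

/-- The set `A`: right boxes of `μ` (including row zero) which are bottom boxes of `λ` in
their column and are not `k''`-related to a left box of `λ/μ`. -/
def AsetD (k : ℕ) (lam mu : ℕ →₀ ℕ) : Set (ℕ × ℕ) :=
  {b | k < b.2 ∧ InDiag0 mu b ∧ b.1 = colHt lam b.2 ∧ ¬ ∃ b' ∈ LeftSkew k lam mu, KppRel k b b'}

/-- `n(λ/μ) = N(A) - 1`. -/
def nstrip (k : ℕ) (lam mu : ℕ →₀ ℕ) : ℕ := ncomp (AsetD k lam mu) - 1

/-! ### Typed strips and typed `k'`-tableaux. -/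

/-- `λ/μ` is a typed `k'`-horizontal strip. -/
def TypedHStrip (k : ℕ) (mu lam : TypedKS k) : Prop :=
  HStrip k mu.p lam.p ∧ mu.t + lam.t ≠ 3

/-- A typed `k'`-tableau of shape `λ/μ`: a chain of typed `k`-strict partitions
`μ = λ⁰ ⊆ λ¹ ⊆ ⋯` stabilizing at `λ`, each consecutive skew diagram a typed
`k'`-horizontal strip; for `i ≥ 1`, the boxes of `λⁱ/λ^{i-1}` carry the entry `i`
(circled when `type(λⁱ) = 2`). -/
structure Tab (k : ℕ) (mu lam : TypedKS k) where
  c : ℕ → TypedKS k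
  first : c 0 = mu
  strips : ∀ i, TypedHStrip k (c i) (c (i + 1))
  last : ∃ N, ∀ i, N ≤ i → c i = lam

/-- `n(T) = ∑_i n(λⁱ/λ^{i-1})`. -/
def nTab {k : ℕ} {mu lam : TypedKS k} (T : Tab k mu lam) : ℕ :=
  ∑ᶠ i : ℕ, nstrip k (T.c (i + 1)).p (T.c i).p

/-- `E_{λ/μ}(x) = ∑_T 2^{n(T)} x^T`, as a formal power series: the coefficient of the
monomial `x^d` is the sum of `2^{n(T)}` over all typed `k'`-tableaux `T` of shape `λ/μ`
having exactly `d i` entries equal to `i+1` (circled or not). -/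
def Efun (k : ℕ) (mu lam : TypedKS k) : MvPowerSeries ℕ ℚ := fun d =>
  ∑ᶠ T : Tab k mu lam,
    if (∀ i, sz ((T.c (i + 1)).p) = sz ((T.c i).p) + d i) then (2 : ℚ) ^ nTab T else 0

/-- A standard typed `k'`-tableau on `λ/μ`. -/
def IsStdTab {k : ℕ} {mu lam : TypedKS k} (T : Tab k mu lam) : Prop :=
  ∀ i, sz ((T.c i).p) = min (sz mu.p + i) (sz lam.p)

/-- Typed `k'`-tableaux of shape `λ/μ` in the doubled ordered alphabet
`x_1 < x_2 < ⋯ < x'_1 < x'_2 < ⋯`. -/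
structure Tab2 (k : ℕ) (mu lam : TypedKS k) where
  c1 : ℕ → TypedKS k
  c2 : ℕ → TypedKS k
  first : c1 0 = mu
  strips1 : ∀ i, TypedHStrip k (c1 i) (c1 (i + 1))
  link : ∃ N, ∀ i, N ≤ i → c1 i = c2 0
  strips2 : ∀ i, TypedHStrip k (c2 i) (c2 (i + 1))
  last : ∃ N, ∀ i, N ≤ i → c2 i = lam

def nTab2 {k : ℕ} {mu lam : TypedKS k} (T : Tab2 k mu lam) : ℕ :=
  (∑ᶠ i : ℕ, nstrip k (T.c1 (i + 1)).p (T.c1 i).p) +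
  ∑ᶠ i : ℕ, nstrip k (T.c2 (i + 1)).p (T.c2 i).p

/-- `E_{λ/μ}(x, x')` in the doubled alphabet, as a formal power series in the
variables `x` (indexed by `Sum.inl`) and `x'` (indexed by `Sum.inr`). -/
def Efun2 (k : ℕ) (mu lam : TypedKS k) : MvPowerSeries (ℕ ⊕ ℕ) ℚ := fun d =>
  ∑ᶠ T : Tab2 k mu lam,
    if (∀ i, sz ((T.c1 (i + 1)).p) = sz ((T.c1 i).p) + d (Sum.inl i)) ∧
       (∀ i, sz ((T.c2 (i + 1)).p) = sz ((T.c2 i).p) + d (Sum.inr i))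
    then (2 : ℚ) ^ nTab2 T else 0

/-! ### The ring `C^(k)` -/

/-- `w_r` as a polynomial generator, `w_0 = 1`. -/
def wPoly : ℕ → MvPolynomial ℕ ℤ := fun r => if r = 0 then 1 else MvPolynomial.X (r - 1)

/-- The defining relations of the ideal `I^(k)`. -/
def Crel (k : ℕ) : Set (MvPolynomial ℕ ℤ) :=
  {P | ∃ r, k < r ∧ P = wPoly r ^ 2 +
    2 * ∑ i ∈ Finset.Icc 1 r, (-1 : MvPolynomial ℕ ℤ) ^ i * (wPoly (r + i) * wPoly (r - i))}

/-- The ring `C^(k) = ℤ[w_1, w_2, …]/I^(k)`. -/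
abbrev Cring (k : ℕ) := MvPolynomial ℕ ℤ ⧸ Ideal.span (Crel k)

/-- `w_r ∈ C^(k)` for `r : ℤ` (`w_0 = 1`, `w_r = 0` for `r < 0`). -/
def wC (k : ℕ) : ℤ → Cring k := fun r =>
  if r < 0 then 0 else Ideal.Quotient.mk (Ideal.span (Crel k)) (wPoly r.toNat)

/-- The set `C(λ)` (0-indexed pairs). -/
def CsetP (k : ℕ) (lam : ℕ →₀ ℕ) : Set (ℕ × ℕ) :=
  {p | p.1 < p.2 ∧ p.2 + 1 ≤ plen lam ∧ 2 * k + p.2 ≤ lam p.1 + lam p.2 + p.1}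

/-- `W^{C(λ)}_α = R^λ w_α`. -/
def Wop (k : ℕ) (lam : ℕ →₀ ℕ) (α : ℕ → ℤ) : Cring k :=
  RApply (CsetP k lam) (UT \ CsetP k lam) (wC k) α

/-- `W_λ = R^λ w_λ`. -/
def Wgiam (k : ℕ) (lam : ℕ →₀ ℕ) : Cring k := Wop k lam fun i => lam i

/-! ### Power series -/

/-- `q_r(x)`: the coefficient of `x^d` is `2^{#supp d}` when `|d| = r`;
these are the coefficients of `∏_i (1+x_i t)/(1-x_i t) = ∑_r q_r(x) t^r`. -/
def qSer (σ R : Type) [CommRing R] (r : ℤ) : MvPowerSeries σ R := fun d =>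
  if ((d.sum fun _ n => n : ℕ) : ℤ) = r then (2 : R) ^ d.support.card else 0

/-- elementary symmetric polynomials `e_r(y₁, …, y_k)`, `r : ℤ`. -/
def esy (k : ℕ) (r : ℤ) : MvPolynomial (Fin k) ℚ :=
  if 0 ≤ r then MvPolynomial.esymm (Fin k) ℚ r.toNat else 0

/-- `ϑ_r(x; y) = ∑_i q_{r-i}(x) e_i(y)`. -/
def thetaSer (k : ℕ) (σ : Type) (r : ℤ) : MvPowerSeries σ (MvPolynomial (Fin k) ℚ) :=
  ∑ i ∈ Finset.range (k + 1),
    MvPowerSeries.C (σ := σ) (R := MvPolynomial (Fin k) ℚ) (esy k i) * qSer σ (MvPolynomial (Fin k) ℚ) (r - i)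

/-- The set `{(i,j) : i < j, λ_i + λ_j > 2k + j - i}` used in `R̃^λ` (0-indexed pairs). -/
def TCset (k : ℕ) (lam : ℕ →₀ ℕ) : Set (ℕ × ℕ) :=
  {p | p.1 < p.2 ∧ 2 * k + p.2 < lam p.1 + lam p.2 + p.1}

/-- `Θ̂_λ = R^λ ϑ_λ`. -/
def ThetaHat (k : ℕ) (σ : Type) (lam : ℕ →₀ ℕ) : MvPowerSeries σ (MvPolynomial (Fin k) ℚ) :=
  RApply (CsetP k lam) (UT \ CsetP k lam) (thetaSer k σ) fun i => lam i

/-- `Θ_λ = R̃^λ ϑ_λ`. -/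
def ThetaT (k : ℕ) (σ : Type) (lam : ℕ →₀ ℕ) : MvPowerSeries σ (MvPolynomial (Fin k) ℚ) :=
  RApply (TCset k lam) (UT \ TCset k lam) (thetaSer k σ) fun i => lam i

/-- scalar `a : ℚ` as a power series constant. -/
def cq (k : ℕ) (σ : Type) (a : ℚ) : MvPowerSeries σ (MvPolynomial (Fin k) ℚ) :=
  MvPowerSeries.C (σ := σ) (R := MvPolynomial (Fin k) ℚ) (MvPolynomial.C a)

/-- `Ĥ_λ = 2^{-ℓ_k(λ)} Θ̂_λ`. -/
def EtaHat (k : ℕ) (σ : Type) (lam : ℕ →₀ ℕ) : MvPowerSeries σ (MvPolynomial (Fin k) ℚ) :=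
  cq k σ ((2 : ℚ) ^ lenk k lam)⁻¹ * ThetaHat k σ lam

/-- `λ - k`: remove one part equal to `k` (assuming `λ` has one at index `ℓ_k(λ)`). -/
def removeK (k : ℕ) (lam : ℕ →₀ ℕ) : ℕ →₀ ℕ :=
  Finsupp.comapDomain (fun i => if i < lenk k lam then i else i + 1) lam
    (Function.Injective.injOn (by intro a b h; dsimp only at h; split_ifs at h <;> omega))

/-- `H̃_λ = 2^{-ℓ_k(λ)} e_k(y) Θ_{λ-k}` for `λ` of positive type, `0` otherwise. -/
def EtaTilde (k : ℕ) (σ : Type) (lam : ℕ →₀ ℕ) : MvPowerSeries σ (MvPolynomial (Fin k) ℚ) :=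
  if posType k lam then
    cq k σ ((2 : ℚ) ^ lenk k lam)⁻¹ *
      (MvPowerSeries.C (σ := σ) (R := MvPolynomial (Fin k) ℚ) (esy k k) * ThetaT k σ (removeK k lam))
  else 0

/-- The eta polynomial `H_λ(x; y)`. -/
def Eta (k : ℕ) (σ : Type) (lam : TypedKS k) : MvPowerSeries σ (MvPolynomial (Fin k) ℚ) :=
  if lam.t = 0 then EtaHat k σ lam.p
  else if lam.t = 1 then cq k σ (1 / 2) * (EtaHat k σ lam.p + EtaTilde k σ lam.p)
  else cq k σ (1 / 2) * (EtaHat k σ lam.p - EtaTilde k σ lam.p)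

/-- substitute `x_i := x_{i+1}`, i.e. `F(x₂, x₃, …)`. -/
def shiftVar {R : Type} [CommRing R] (F : MvPowerSeries ℕ R) : MvPowerSeries ℕ R := fun d =>
  if d 0 = 0 then F (Finsupp.comapDomain Nat.succ d (Nat.succ_injective.injOn)) else 0

/-- The power series `F` in the variables indexed by the image of an injection `g`. -/
def embVar {σ τ : Type} (g : σ → τ) (hg : Function.Injective g) {R : Type} [CommRing R]
    (F : MvPowerSeries σ R) : MvPowerSeries τ R := fun d =>
  if ∀ s ∈ d.support, s ∈ Set.range g then F (Finsupp.comapDomain g d hg.injOn) else 0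

/-- The Schur polynomial `s_{λ'}(y₁,…,y_k)` of the conjugate partition, via the dual
Jacobi–Trudi formula `det(e_{λ_i - i + j})`. -/
def schurConjE (k : ℕ) (lam : ℕ →₀ ℕ) : MvPolynomial (Fin k) ℚ :=
  (Matrix.of fun i j : Fin (plen lam) => esy k ((lam i : ℤ) - i + j)).det

/-- The Schur `Q`-function of a strict partition. -/
def SchurQ (nu : ℕ →₀ ℕ) : MvPowerSeries ℕ ℚ := RApply UT ∅ (qSer ℕ ℚ) fun i => nu i

/-- The Schur `P`-function `P_ν = 2^{-ℓ(ν)} Q_ν` of a strict partition. -/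
def SchurP (nu : ℕ →₀ ℕ) : MvPowerSeries ℕ ℚ :=
  MvPowerSeries.C (σ := ℕ) (R := ℚ) ((2 : ℚ) ^ plen nu)⁻¹ * SchurQ nu

/-! ### The Weyl group `W̃_∞` of type D, realized by signed permutations of `ℤ`. -/

/-- The simple reflections `s_i`, acting on `ℤ`: `s_0` is `1 ↔ -2, 2 ↔ -1`, and for
`i ≥ 1`, `s_i` is `i ↔ i+1`, `-i ↔ -(i+1)`. -/
def sGen : ℕ → Equiv.Perm ℤ
  | 0 => Equiv.swap 1 (-2) * Equiv.swap 2 (-1)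
  | n + 1 => Equiv.swap ((n : ℤ) + 1) ((n : ℤ) + 2) * Equiv.swap (-(n : ℤ) - 1) (-(n : ℤ) - 2)

/-- `W̃_∞`, the group generated by the `s_i`. -/
def DGrp : Subgroup (Equiv.Perm ℤ) := Subgroup.closure (Set.range sGen)

/-- The length `ℓ(w)`: the least length of an expression of `w` as a product of the `s_i`. -/
def wlen (w : Equiv.Perm ℤ) : ℕ :=
  sInf {m | ∃ l : List ℕ, l.length = m ∧ w = (l.map sGen).prod}

/-- `l` is a reduced word for `w`. -/
def IsRedWord (w : Equiv.Perm ℤ) (l : List ℕ) : Prop :=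
  w = (l.map sGen).prod ∧ l.length = wlen w

/-! ### Stanley symmetric functions and Billey–Haiman Schubert polynomials of type D,
defined through the nilCoxeter-algebra expansions `D(x₁)D(x₂)⋯ = ∑_w E_w(x) u_w` and
`D(x₁)D(x₂)⋯ A₁(y₁)A₂(y₂)⋯ = ∑_w DS_w(x;y) u_w`. -/

/-- A subword of the sequence `(…, 3, 2, 1, 0, 2, 3, …)` occurring in
`D(t) = (1+tuₙ)⋯(1+tu₂)(1+tu₁)(1+tu₀)(1+tu₂)⋯(1+tuₙ)`: a strictly decreasing list
followed by a strictly increasing list with letters `≥ 2`. -/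
def DWord (l : List ℕ) : Prop :=
  ∃ A B : List ℕ, l = A ++ B ∧ A.Chain' (· > ·) ∧ B.Chain' (· < ·) ∧ ∀ b ∈ B, 2 ≤ b

/-- A subword of the sequence `(…, i+1, i)` occurring in `A_i(t) = (1+tuₙ)⋯(1+tu_i)`:
a strictly decreasing list with letters `≥ i`. -/
def AWord (i : ℕ) (l : List ℕ) : Prop := l.Chain' (· > ·) ∧ ∀ a ∈ l, i ≤ a

/-- concatenation `a 0 ++ a 1 ++ ⋯ ++ a (N-1)`. -/
def flatUpTo (a : ℕ → List ℕ) (N : ℕ) : List ℕ := ((List.range N).map a).flatten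

def NBound (d : ℕ →₀ ℕ) : ℕ := d.support.sup id + 1
def NBoundL (d : (ℕ ⊕ ℕ) →₀ ℕ) : ℕ := (d.support.sup fun s => Sum.elim id (fun _ => 0) s) + 1
def NBoundR (d : (ℕ ⊕ ℕ) →₀ ℕ) : ℕ := (d.support.sup fun s => Sum.elim (fun _ => 0) id s) + 1

/-- The type D Stanley symmetric function `E_w(x)`: the coefficient of `x^d` counts the
tuples `(a_1, a_2, …)` of `D`-words with `a_j` of length `d j`, whose concatenation is a
reduced word for `w`. -/
def Ew (w : Equiv.Perm ℤ) : MvPowerSeries ℕ ℚ := fun d =>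
  (Nat.card {a : ℕ → List ℕ // (∀ j, (a j).length = d j) ∧ (∀ j, DWord (a j)) ∧
    IsRedWord w (flatUpTo a (NBound d))} : ℚ)

/-- `E_w(x, x')` in the doubled variable set `x₁, x₂, …, x'₁, x'₂, …`. -/
def Ew2 (w : Equiv.Perm ℤ) : MvPowerSeries (ℕ ⊕ ℕ) ℚ := fun d =>
  (Nat.card {ab : (ℕ → List ℕ) × (ℕ → List ℕ) //
    (∀ j, (ab.1 j).length = d (Sum.inl j)) ∧ (∀ j, (ab.2 j).length = d (Sum.inr j)) ∧
    (∀ j, DWord (ab.1 j)) ∧ (∀ j, DWord (ab.2 j)) ∧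
    IsRedWord w (flatUpTo ab.1 (NBoundL d) ++ flatUpTo ab.2 (NBoundR d))} : ℚ)

/-- The Billey–Haiman Schubert polynomial `DS_w(x; y)`, with the `x` variables indexed by
`Sum.inl` and the `y` variables indexed by `Sum.inr` (`y_{j+1} ↔ Sum.inr j`). -/
def DSw (w : Equiv.Perm ℤ) : MvPowerSeries (ℕ ⊕ ℕ) ℚ := fun d =>
  (Nat.card {ac : (ℕ → List ℕ) × (ℕ → List ℕ) //
    (∀ j, (ac.1 j).length = d (Sum.inl j)) ∧ (∀ j, (ac.2 j).length = d (Sum.inr j)) ∧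
    (∀ j, DWord (ac.1 j)) ∧ (∀ j, AWord (j + 1) (ac.2 j)) ∧
    IsRedWord w (flatUpTo ac.1 (NBoundL d) ++ flatUpTo ac.2 (NBoundR d))} : ℚ)

def NBound3a (d : ((ℕ ⊕ ℕ) ⊕ ℕ) →₀ ℕ) : ℕ :=
  (d.support.sup fun s => Sum.elim (Sum.elim id fun _ => 0) (fun _ => 0) s) + 1
def NBound3b (d : ((ℕ ⊕ ℕ) ⊕ ℕ) →₀ ℕ) : ℕ :=
  (d.support.sup fun s => Sum.elim (Sum.elim (fun _ => 0) id) (fun _ => 0) s) + 1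
def NBound3c (d : ((ℕ ⊕ ℕ) ⊕ ℕ) →₀ ℕ) : ℕ :=
  (d.support.sup fun s => Sum.elim (fun _ => 0) id s) + 1

/-- `DS_w(x, x'; y)` in the doubled `x`-alphabet: variables `x` at `inl ∘ inl`,
`x'` at `inl ∘ inr`, `y` at `inr`. -/
def DSw2 (w : Equiv.Perm ℤ) : MvPowerSeries ((ℕ ⊕ ℕ) ⊕ ℕ) ℚ := fun d =>
  (Nat.card {abc : ((ℕ → List ℕ) × (ℕ → List ℕ)) × (ℕ → List ℕ) //
    (∀ j, (abc.1.1 j).length = d (Sum.inl (Sum.inl j))) ∧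
    (∀ j, (abc.1.2 j).length = d (Sum.inl (Sum.inr j))) ∧
    (∀ j, (abc.2 j).length = d (Sum.inr j)) ∧
    (∀ j, DWord (abc.1.1 j)) ∧ (∀ j, DWord (abc.1.2 j)) ∧ (∀ j, AWord (j + 1) (abc.2 j)) ∧
    IsRedWord w (flatUpTo abc.1.1 (NBound3a d) ++ flatUpTo abc.1.2 (NBound3b d) ++
      flatUpTo abc.2 (NBound3c d))} : ℚ)

/-! ### The `k`-Grassmannian element `w_λ` attached to a typed `k`-strict partition
`λ ∈ P̃(k,n)`, in one-line notation. -/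

/-- `λ` fits in the `(n+1-k) × (n+k)` rectangle, i.e. `λ ∈ P̃(k,n)`. -/
def FitsIn (k n : ℕ) (lam : ℕ →₀ ℕ) : Prop := lam 0 ≤ n + k ∧ plen lam + k ≤ n + 1

/-- The number of boxes of the diagonal `{[r,c] : r + c = d}` of the staircase (columns
`> k`, rows `1..n`) lying outside `λ`. -/
def lenDiag (k n : ℕ) (lam : ℕ →₀ ℕ) (d : ℕ) : ℕ :=
  ((Finset.Icc 1 n).filter fun ρ => ρ + k < d ∧ lam (ρ - 1) + ρ < d).card

/-- The index `r + c` of the diagonal which is `k'`-related to the bottom box of column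
`c ≤ k` of `λ`. -/
def relDiag (k : ℕ) (lam : ℕ →₀ ℕ) (c : ℕ) : ℕ := 2 * k + 1 + colHt lam c - c

/-- `u_1 < u_2 < ⋯ < u_k`: the sorted lengths of the related diagonals. -/
def uListD (k n : ℕ) (lam : ℕ →₀ ℕ) : List ℕ :=
  ((Finset.Icc 1 k).image fun c => lenDiag k n lam (relDiag k lam c)).sort (· ≤ ·)

/-- The barred entries `-(λ¹_1 + 1), …, -(λ¹_r + 1)`, where `λ¹_i = λ_i - k`. -/
def barList (k : ℕ) (lam : ℕ →₀ ℕ) : List ℤ :=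
  (List.range (lenk k lam)).map fun i => -(((lam i : ℤ) - k) + 1)

/-- `v_1 < v_2 < ⋯`: the sorted lengths of the non-related diagonals, i.e. the elements of
`{0, …, n}` distinct from the `u_i`, the `λ¹_i` and `0`. -/
def vListD (k n : ℕ) (lam : ℕ →₀ ℕ) : List ℕ :=
  ((Finset.range (n + 1)).filter fun m =>
    m ∉ ((Finset.Icc 1 k).image fun c => lenDiag k n lam (relDiag k lam c)) ∪
        ((Finset.range (lenk k lam)).image fun i => lam i - k) ∪ {0}).sort (· ≤ ·)

/-- The one-line notation `(w_λ(1), …, w_λ(n+1))` of the `k`-Grassmannian element `w_λ`,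
for `λ` of type `t`. -/
def olist (k n : ℕ) (lam : ℕ →₀ ℕ) (t : ℕ) : List ℤ :=
  let r := lenk k lam
  let bars := barList k lam
  let vs := (vListD k n lam).map fun v => (v : ℤ) + 1
  if t = 1 then
    ((uListD k n lam).map fun u => (u : ℤ) + 1) ++ bars ++
      [if Even r then (1 : ℤ) else -1] ++ vs
  else if t = 2 then
    (match uListD k n lam with
      | [] => []
      | h :: tl => (-((h : ℤ) + 1)) :: tl.map fun u => (u : ℤ) + 1) ++ bars ++
      [if Even r then (-1 : ℤ) else 1] ++ vs
  else
    [if Even r then (1 : ℤ) else -1] ++ ((uListD k n lam).tail.map fun u => (u : ℤ) + 1) ++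
      bars ++ vs

/-- The `k`-Grassmannian element `w_λ` as a function `ℤ → ℤ` (via `w(-i) = -w(i)` and
`w(i) = i` for `i > n+1`). -/
def grassFun (k n : ℕ) (lam : ℕ →₀ ℕ) (t : ℕ) : ℤ → ℤ := fun i =>
  if 1 ≤ i ∧ i ≤ (n : ℤ) + 1 then (olist k n lam t).getD (i - 1).toNat 0
  else if -((n : ℤ) + 1) ≤ i ∧ i ≤ -1 then -((olist k n lam t).getD (-i - 1).toNat 0)
  else i

/-- `w` is the `k`-Grassmannian element `w_λ` of `W̃_{n+1}` attached to `λ`. -/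
def IsGrass (k n : ℕ) (lam : TypedKS k) (w : Equiv.Perm ℤ) : Prop :=
  ∀ i : ℤ, w i = grassFun k n lam.p lam.t i

/-- `w ∈ W̃_∞` is a skew element. -/
def Skew (w : Equiv.Perm ℤ) : Prop :=
  ∃ (k n : ℕ) (lam : TypedKS k) (wl w' : Equiv.Perm ℤ), 0 < k ∧ FitsIn k n lam.p ∧
    IsGrass k n lam wl ∧ w' ∈ DGrp ∧ wl = w * w' ∧ wlen wl = wlen w + wlen w'


/-! ### Additional helpers for individual statements. -/

/-- The set of pairs of the operator `Ψ = ∏_{j=2}^{ℓ+1} (1-R_{1j})/(1+R_{1j})`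
(0-indexed pairh `(0, j)`, `1 ≤ j ≤ ℓ`). -/
def PsiSet (l : ℕ) : Set (ℕ × ℕ) := {q | q.1 = 0 ∧ 1 ≤ q.2 ∧ q.2 ≤ l}

/-- The integer sequence `(p, ν_1, …, ν_ℓ, 0, 0, …)`. -/
def consVec (p : ℤ) {l : ℕ} (ν : Fin l → ℤ) : ℕ → ℤ := fun m =>
  if m = 0 then p else if h : m - 1 < l then ν ⟨m - 1, h⟩ else 0

/-- A filling of the boxes of `μ` by the marked letters `1' < 2' < ⋯ < k'` (coded
`1, …, k`), strictly increasing along rows, weakly increasing down columns. -/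
def ValidFill (k : ℕ) (mu : ℕ →₀ ℕ) (f : ℕ × ℕ → ℕ) : Prop :=
  (∀ b, InDiag mu b → 1 ≤ f b ∧ f b ≤ k) ∧ (∀ b, ¬ InDiag mu b → f b = 0) ∧
  (∀ r c, InDiag mu (r, c + 1) → f (r, c) < f (r, c + 1)) ∧
  (∀ r c, InDiag mu (r + 1, c) → f (r, c) ≤ f (r + 1, c))

/-- The boxes of the diagram of `μ` as a finite set. -/
def boxFinset (mu : ℕ →₀ ℕ) : Finset (ℕ × ℕ) :=
  mu.support.biUnion fun i => (Finset.Icc 1 (mu i)).image fun c => (i + 1, c)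

/-- The monomial `∏_j y_j^{n_j}` of a marked filling, `n_j` the number of entries `j'`. -/
def yMono (k : ℕ) (mu : ℕ →₀ ℕ) (f : ℕ × ℕ → ℕ) : MvPolynomial (Fin k) ℚ :=
  ∏ b ∈ boxFinset mu, (if h : f b - 1 < k then MvPolynomial.X (⟨f b - 1, h⟩ : Fin k) else 1)

/-- The skew Schur S-function `S_{λ/μ}(x) = det(q_{λ_i - μ_j + j - i})`. -/
def Sdet (lam mu : ℕ →₀ ℕ) : MvPowerSeries ℕ ℚ :=
  (Matrix.of fun i j : Fin (plen lam) =>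
    qSer ℕ ℚ ((lam (i : ℕ) : ℤ) - (mu (j : ℕ) : ℤ) + (j : ℕ) - (i : ℕ))).det

/-- The empty typed `k`-strict partition. -/
def emptyTKS (k : ℕ) (hk : 0 < k) : TypedKS k where
  p := 0
  mono := fun _ _ _ => le_rfl
  strict := fun _ _ => by simp
  t := 0
  t_le := by norm_num
  t_pos := by
    constructor
    · intro h; exact absurd rfl h
    · rintro ⟨i, hi⟩
      simp only [Finsupp.coe_zero, Pi.zero_apply] at hi
      omega

lemma embDS_inj :
    Function.Injective (Sum.elim (Sum.inl ∘ Sum.inr) Sum.inr : ℕ ⊕ ℕ → (ℕ ⊕ ℕ) ⊕ ℕ) := by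
  rintro (a | a) (b | b) h <;> simp_all


/-! ### Auxiliary development for statement0 -/

section Statement0Aux

/-- coefficients of `(1-x)/(1+x)`. -/
def cc : ℕ → ℤ := fun m => if m = 0 then 1 else 2 * (-1) ^ m

@[simp] lemma cc_zero : cc 0 = 1 := rfl

lemma cc_pos {m : ℕ} (h : m ≠ 0) : cc m = 2 * (-1) ^ m := if_neg h

/-- `(-1)^a` for integer `a`. -/
def negE : ℤ → ℤ := fun a => if Even a then 1 else -1

@[simp] lemma negE_natCast (n : ℕ) : negE n = (-1) ^ n := by
  unfold negE
  rcases Nat.even_or_odd n with h | h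
  · rw [if_pos (by exact_mod_cast h), h.neg_one_pow]
  · rw [if_neg (by simpa using (Int.odd_coe_nat n).2 h), h.neg_one_pow]

lemma negE_add (a b : ℤ) : negE (a + b) = negE a * negE b := by
  unfold negE
  by_cases ha : Even a <;> by_cases hb : Even b <;>
    simp [ha, hb, Int.even_add]

lemma negE_neg (a : ℤ) : negE (-a) = negE a := by simp [negE]

lemma negE_mul_self (a : ℤ) : negE a * negE a = 1 := by
  unfold negE; split <;> ring

def CCa (M : ℕ) : ℤ := ∑ p ∈ Finset.HasAntidiagonal.antidiagonal M, negE p.1 * cc p.1 * cc p.2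

@[simp] lemma CCa_zero : CCa 0 = 1 := by simp [CCa]

lemma CCa_pos (M : ℕ) (hM : M ≠ 0) : CCa M = 0 := by
  obtain ⟨K, rfl⟩ := Nat.exists_eq_succ_of_ne_zero hM
  rw [CCa, Finset.Nat.sum_antidiagonal_eq_sum_range_succ_mk]
  rw [Finset.sum_range_succ, Finset.sum_range_succ']
  have hmid : ∀ m ∈ Finset.range K,
      negE (↑(m+1)) * cc (m+1) * cc (K + 1 - (m+1)) = -4 * (-1 : ℤ) ^ (K - 1 - m) := by
    intro m hm
    rw [Finset.mem_range] at hm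
    have h1 : K + 1 - (m + 1) = K - m := by omega
    have h2 : K - m ≠ 0 := by omega
    rw [h1, negE_natCast, cc_pos (Nat.succ_ne_zero m), cc_pos h2]
    have h3 : K - m = (K - 1 - m) + 1 := by omega
    rw [h3]
    have h4 : ((-1:ℤ))^(m+1) * (2*(-1)^(m+1)) * (2*(-1)^((K-1-m)+1))
        = 4 * ((-1)^((m+1)*2)) * ((-1)^(K-1-m) * (-1)) := by ring
    rw [h4, Even.neg_one_pow ⟨m+1, by ring⟩]
    ring
  rw [Finset.sum_congr rfl hmid]
  have hsum : ∑ m ∈ Finset.range K, (-4 : ℤ) * (-1) ^ (K - 1 - m)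
      = -4 * if Even K then 0 else 1 := by
    rw [Finset.sum_range_reflect (fun j => (-4:ℤ) * (-1)^j) K, ← Finset.mul_sum,
      neg_one_geom_sum]
  rw [hsum]
  have e0 : negE (↑(0:ℕ)) * cc 0 * cc (K + 1 - 0) = 2 * (-1:ℤ)^(K+1) := by
    rw [negE_natCast, cc_zero, Nat.sub_zero, cc_pos (Nat.succ_ne_zero K), pow_succ]
    ring
  have e1 : negE (↑(K+1)) * cc (K+1) * cc (K + 1 - (K+1)) = 2 := by
    rw [Nat.sub_self, negE_natCast, cc_pos (Nat.succ_ne_zero K), cc_zero]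
    have h4 : ((-1:ℤ))^(K+1) * (2*(-1)^(K+1)) * 1 = 2 * (-1)^((K+1)*2) := by ring
    rw [h4, Even.neg_one_pow ⟨K+1, by ring⟩]
    ring
  rw [e0, e1]
  rcases Nat.even_or_odd K with h | h
  · rw [if_pos h, Odd.neg_one_pow (by simpa using h.add_one)]
    ring
  · rw [if_neg (by simpa [Nat.not_even_iff_odd] using h),
      Even.neg_one_pow (by simpa using h.add_one)]
    ring

variable {R : Type*} [CommRing R]

/-- `∑_{a+b=N} (-1)^a F_a F_b`. -/
def SZ (F : ℤ → R) (N : ℤ) : R :=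
  ∑ a ∈ Finset.Icc (0 : ℤ) N, (negE a : R) * (F a * F (N - a))

/-- the generator shape `F_r² + 2 ∑_{i=1}^r (-1)^i F_{r+i} F_{r-i}`. -/
def GR (F : ℤ → R) (r : ℕ) : R :=
  F r * F r + 2 * ∑ i ∈ Finset.Icc 1 r, (-1 : R) ^ i * (F (r + i) * F ((r : ℤ) - i))

lemma centered (g : ℤ → R) (r : ℕ) :
    ∑ a ∈ Finset.Icc (-(r : ℤ)) r, g a
      = g 0 + ∑ i ∈ Finset.Icc (1 : ℕ) r, (g (-(i : ℤ)) + g i) := by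
  induction r with
  | zero => simp
  | succ n ih =>
      have hins : Finset.Icc (-(n + 1 : ℤ)) (n + 1)
          = insert (-(n + 1 : ℤ)) (insert ((n : ℤ) + 1) (Finset.Icc (-(n : ℤ)) n)) := by
        ext x
        simp only [Finset.mem_Icc, Finset.mem_insert]
        push_cast
        omega
      push_cast
      rw [hins, Finset.sum_insert, Finset.sum_insert, ih,
        Finset.sum_Icc_succ_top (by omega : 1 ≤ n + 1)]
      · push_cast
        ring
      · simp only [Finset.mem_Icc]
        push_cast
        omega
      · simp only [Finset.mem_insert, Finset.mem_Icc]
        push_cast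
        omega

lemma SZ_even (F : ℤ → R) (r : ℕ) : SZ F (2 * r) = (negE r : R) * GR F r := by
  have hmap : Finset.Icc (0 : ℤ) (2 * r)
      = (Finset.Icc (-(r : ℤ)) r).map (addRightEmbedding (r : ℤ)) := by
    rw [Finset.map_add_right_Icc]
    congr 1 <;> ring
  rw [SZ, hmap, Finset.sum_map]
  simp only [addRightEmbedding_apply]
  rw [centered (fun a => (negE (a + r) : R) * (F (a + r) * F (2 * r - (a + r)))) r]
  rw [GR, mul_add, Finset.mul_sum, Finset.mul_sum]
  congr 1
  · have h1 : (2 * (r : ℤ) - (0 + r)) = (r : ℤ) := by ring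
    rw [h1]
    have h0 : ((0 : ℤ) + r) = (r : ℤ) := by ring
    rw [h0]
  · apply Finset.sum_congr rfl
    intro i hi
    have e1 : (-(i : ℤ) + r) = (r : ℤ) - i := by ring
    have e2 : (2 * (r : ℤ) - (-(i : ℤ) + r)) = (r : ℤ) + i := by ring
    have e3 : ((i : ℤ) + r) = (r : ℤ) + i := by ring
    have e4 : (2 * (r : ℤ) - ((i : ℤ) + r)) = (r : ℤ) - i := by ring
    rw [e2, e1, e4, e3]
    have hne : negE ((r : ℤ) - i) = negE r * negE i := by
      have : ((r : ℤ) - i) = r + (-i) := by ring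
      rw [this, negE_add, negE_neg]
    have hne2 : negE ((r : ℤ) + i) = negE r * negE i := by rw [negE_add]
    rw [hne, hne2, negE_natCast, negE_natCast]
    push_cast
    ring

lemma shift_sum (F : ℤ → R) (hF : ∀ s : ℤ, s < 0 → F s = 0) (N : ℤ) (m m' : ℕ) :
    ∑ a ∈ Finset.Icc (0 : ℤ) N, (negE a : R) * (F (a - m) * F (N - a - m'))
      = (negE m : R) * SZ F (N - m - m') := by
  have hmap : Finset.Icc (0 : ℤ) N
      = (Finset.Icc (-(m : ℤ)) (N - m)).map (addRightEmbedding (m : ℤ)) := by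
    rw [Finset.map_add_right_Icc]
    congr 1 <;> ring
  rw [hmap, Finset.sum_map]
  simp only [addRightEmbedding_apply]
  have hterm : ∀ b ∈ Finset.Icc (-(m : ℤ)) (N - m),
      (negE (b + m) : R) * (F (b + m - m) * F (N - (b + m) - m'))
        = (negE m : R) * ((negE b : R) * (F b * F (N - m - m' - b))) := by
    intro b _
    have e1 : b + (m : ℤ) - m = b := by ring
    have e2 : N - (b + (m : ℤ)) - m' = N - m - m' - b := by ring
    rw [e1, e2, negE_add]
    push_cast
    ring
  rw [Finset.sum_congr rfl hterm, ← Finset.mul_sum]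
  congr 1
  have h1 : ∑ b ∈ Finset.Icc (-(m : ℤ)) (N - m),
      (negE b : R) * (F b * F (N - m - m' - b))
      = ∑ b ∈ Finset.Icc (-(m : ℤ)) N, (negE b : R) * (F b * F (N - m - m' - b)) := by
    apply Finset.sum_subset
    · apply Finset.Icc_subset_Icc le_rfl
      omega
    · intro x hx hxn
      simp only [Finset.mem_Icc] at hx hxn
      have : N - (m : ℤ) - m' - x < 0 := by omega
      rw [hF _ this, mul_zero, mul_zero]
  have h2 : SZ F (N - m - m')
      = ∑ b ∈ Finset.Icc (-(m : ℤ)) N, (negE b : R) * (F b * F (N - m - m' - b)) := by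
    rw [SZ]
    apply Finset.sum_subset
    · apply Finset.Icc_subset_Icc
      · omega
      · omega
    · intro x hx hxn
      simp only [Finset.mem_Icc] at hx hxn
      rcases lt_or_ge x 0 with hx0 | hx0
      · rw [hF _ hx0, zero_mul, mul_zero]
      · have : N - (m : ℤ) - m' - x < 0 := by omega
        rw [hF _ this, mul_zero, mul_zero]
  rw [h1, h2]



/-! basic lemmas on `wC` -/

lemma wC_neg {k : ℕ} {r : ℤ} (h : r < 0) : wC k r = 0 := if_pos h

lemma wC_natCast (k n : ℕ) : wC k n = Ideal.Quotient.mk (Ideal.span (Crel k)) (wPoly n) := by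
  rw [wC]
  rw [if_neg (by exact_mod_cast Int.not_lt.2 (Int.natCast_nonneg n))]
  simp

lemma wC_zero (k : ℕ) : wC k 0 = 1 := by
  have : ((0 : ℕ) : ℤ) = 0 := rfl
  rw [← this, wC_natCast]
  rw [show wPoly 0 = 1 from if_pos rfl, map_one]

lemma GR_wC {k r : ℕ} (h : k < r) : GR (wC k) r = 0 := by
  have h0 := (Ideal.Quotient.eq_zero_iff_mem (I := Ideal.span (Crel k))).2
    (Ideal.subset_span ⟨r, h, rfl⟩)
  have key : GR (wC k) r = Ideal.Quotient.mk (Ideal.span (Crel k)) (wPoly r ^ 2 +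
      2 * ∑ i ∈ Finset.Icc 1 r, (-1 : MvPolynomial ℕ ℤ) ^ i * (wPoly (r + i) * wPoly (r - i))) := by
    rw [GR]
    simp only [map_add, map_mul, map_pow, map_sum, map_neg, map_one, map_ofNat]
    congr 1
    · rw [wC_natCast, pow_two]
    · congr 1
      apply Finset.sum_congr rfl
      intro i hi
      rw [Finset.mem_Icc] at hi
      rw [show ((r : ℤ) + i) = ((r + i : ℕ) : ℤ) by push_cast; ring,
        show ((r : ℤ) - i) = ((r - i : ℕ) : ℤ) by rw [Nat.cast_sub hi.2],
        wC_natCast, wC_natCast]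
  rw [key, h0]

lemma SZ_wC_even {k r : ℕ} (h : k < r) : SZ (wC k) (2 * (r : ℤ)) = 0 := by
  rw [show (2 * (r : ℤ)) = ((2 : ℤ) * (r : ℕ)) from rfl]
  rw [SZ_even (wC k) r, GR_wC h, mul_zero]

/-! the power series `ψ_r` -/

def psi (k : ℕ) (r : ℤ) : PowerSeries (Cring k) :=
  PowerSeries.mk fun m => (cc m : Cring k) * wC k (r - m)

@[simp] lemma coeff_psi (k M : ℕ) (r : ℤ) :
    PowerSeries.coeff M (psi k r) = (cc M : Cring k) * wC k (r - M) :=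
  PowerSeries.coeff_mk _ _

lemma psi_neg {k : ℕ} {r : ℤ} (h : r < 0) : psi k r = 0 := by
  ext M
  rw [coeff_psi, map_zero, wC_neg (by omega : r - (M : ℤ) < 0), mul_zero]

lemma psi_zero (k : ℕ) : psi k 0 = 1 := by
  ext M
  rw [coeff_psi, PowerSeries.coeff_one]
  cases M with
  | zero => simp [wC_zero]
  | succ n =>
      rw [wC_neg (by push_cast; omega : (0 : ℤ) - (n + 1 : ℕ) < 0), mul_zero,
        if_neg (Nat.succ_ne_zero n)]

lemma coeff_SZ_psi (k M : ℕ) (N : ℤ) :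
    PowerSeries.coeff M (SZ (psi k) N) = (CCa M : Cring k) * SZ (wC k) (N - M) := by
  rw [SZ, map_sum]
  have e1 : ∀ a ∈ Finset.Icc (0 : ℤ) N,
      PowerSeries.coeff M ((negE a : PowerSeries (Cring k)) * (psi k a * psi k (N - a)))
        = ∑ p ∈ Finset.HasAntidiagonal.antidiagonal M, ((cc p.1 * cc p.2 : ℤ) : Cring k) *
            ((negE a : Cring k) * (wC k (a - p.1) * wC k (N - a - p.2))) := by
    intro a _
    rw [← map_intCast (PowerSeries.C (R := Cring k)) (negE a), PowerSeries.coeff_C_mul,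
      PowerSeries.coeff_mul]
    rw [Finset.mul_sum]
    apply Finset.sum_congr rfl
    intro p _
    rw [coeff_psi, coeff_psi]
    push_cast
    ring
  rw [Finset.sum_congr rfl e1, Finset.sum_comm]
  have e2 : ∀ p ∈ Finset.HasAntidiagonal.antidiagonal M,
      ∑ a ∈ Finset.Icc (0 : ℤ) N, ((cc p.1 * cc p.2 : ℤ) : Cring k) *
          ((negE a : Cring k) * (wC k (a - p.1) * wC k (N - a - p.2)))
        = ((negE p.1 * cc p.1 * cc p.2 : ℤ) : Cring k) * SZ (wC k) (N - M) := by
    intro p hp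
    rw [← Finset.mul_sum, shift_sum (wC k) (fun s hs => wC_neg hs) N p.1 p.2]
    rw [Finset.HasAntidiagonal.mem_antidiagonal] at hp
    have : N - (p.1 : ℤ) - p.2 = N - M := by rw [← hp]; push_cast; ring
    rw [this]
    push_cast
    ring
  rw [Finset.sum_congr rfl e2, ← Finset.sum_mul]
  congr 1
  rw [CCa]
  push_cast
  rfl

lemma SZ_psi_even {k r : ℕ} (h : k < r) : SZ (psi k) (2 * (r : ℤ)) = 0 := by
  ext M
  rw [coeff_SZ_psi, map_zero]
  cases Nat.eq_zero_or_pos M with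
  | inl h0 =>
      subst h0
      rw [show (2 * (r : ℤ) - (0 : ℕ)) = 2 * (r : ℤ) by push_cast; ring, SZ_wC_even h,
        mul_zero]
  | inr h1 =>
      rw [CCa_pos M (by omega)]
      push_cast
      rw [zero_mul]

lemma GR_psi {k r : ℕ} (h : k < r) : GR (psi k) r = 0 := by
  have h1 : ((negE r : ℤ) : PowerSeries (Cring k)) * GR (psi k) r = 0 := by
    rw [← SZ_even (psi k) r]
    exact_mod_cast SZ_psi_even h
  have h2 : ((negE r * negE r : ℤ) : PowerSeries (Cring k)) = 1 := by
    rw [negE_mul_self]; push_cast; rfl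
  calc GR (psi k) r = ((negE r * negE r : ℤ) : PowerSeries (Cring k)) * GR (psi k) r := by
        rw [h2, one_mul]
    _ = ((negE r : ℤ) : PowerSeries (Cring k)) *
          (((negE r : ℤ) : PowerSeries (Cring k)) * GR (psi k) r) := by push_cast; ring
    _ = 0 := by rw [h1, mul_zero]

/-! the homomorphism `Δ` -/

def Delta0 (k : ℕ) : MvPolynomial ℕ ℤ →+* PowerSeries (Cring k) :=
  MvPolynomial.eval₂Hom (Int.castRingHom _) fun i => psi k (i + 1)

lemma Delta0_wPoly (k n : ℕ) : Delta0 k (wPoly n) = psi k n := by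
  cases n with
  | zero => rw [show wPoly 0 = 1 from if_pos rfl, map_one, show ((0:ℕ):ℤ) = 0 from rfl, psi_zero]
  | succ n =>
      rw [show wPoly (n+1) = MvPolynomial.X n from if_neg (Nat.succ_ne_zero n)]
      rw [Delta0, MvPolynomial.eval₂Hom_X']
      congr 1

lemma Delta0_rel (k : ℕ) : ∀ P ∈ Crel k, Delta0 k P = 0 := by
  rintro P ⟨r, hr, rfl⟩
  rw [map_add, map_pow, map_mul, map_sum, Delta0_wPoly]
  have e1 : ∀ i ∈ Finset.Icc 1 r,
      Delta0 k ((-1 : MvPolynomial ℕ ℤ) ^ i * (wPoly (r + i) * wPoly (r - i)))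
        = (-1 : PowerSeries (Cring k)) ^ i * (psi k ((r : ℤ) + i) * psi k ((r : ℤ) - i)) := by
    intro i hi
    rw [Finset.mem_Icc] at hi
    rw [map_mul, map_pow, map_neg, map_one, map_mul, Delta0_wPoly, Delta0_wPoly]
    have c1 : ((r + i : ℕ) : ℤ) = (r : ℤ) + i := by push_cast; ring
    have c2 : ((r - i : ℕ) : ℤ) = (r : ℤ) - i := by rw [Nat.cast_sub hi.2]
    rw [c1, c2]
  rw [Finset.sum_congr rfl e1, map_ofNat, pow_two]
  exact GR_psi hr

def DeltaH (k : ℕ) : Cring k →+* PowerSeries (Cring k) :=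
  Ideal.Quotient.lift _ (Delta0 k) (by
    intro a ha
    have hle : Ideal.span (Crel k) ≤ RingHom.ker (Delta0 k) :=
      Ideal.span_le.2 fun P hP => Delta0_rel k P hP
    exact RingHom.mem_ker.1 (hle ha))

lemma DeltaH_wC (k : ℕ) (r : ℤ) : DeltaH k (wC k r) = psi k r := by
  by_cases h : r < 0
  · rw [wC_neg h, map_zero, psi_neg h]
  · rw [wC, if_neg h, DeltaH, Ideal.Quotient.lift_mk, Delta0_wPoly,
      Int.toNat_of_nonneg (Int.not_lt.1 h)]



/-! ### Evaluation of `RApply (PsiSet l) ∅ (wC k)` -/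

variable {l : ℕ}

def femb (l : ℕ) : Fin l ↪ ℕ × ℕ :=
  ⟨fun i => (0, (i : ℕ) + 1), by intro a b h; simp only [Prod.mk.injEq] at h; exact Fin.ext (by omega)⟩

def embF (l : ℕ) (d : Fin l →₀ ℕ) : (ℕ × ℕ) →₀ ℕ := Finsupp.embDomain (femb l) d

lemma embF_apply_mem (d : Fin l →₀ ℕ) (i : Fin l) : embF l d (0, (i : ℕ) + 1) = d i :=
  Finsupp.embDomain_apply_self (femb l) d i

lemma embF_apply_zero (d : Fin l →₀ ℕ) {q : ℕ × ℕ}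
    (hq : q.1 ≠ 0 ∨ q.2 = 0 ∨ l + 1 ≤ q.2) : embF l d q = 0 := by
  apply Finsupp.embDomain_notin_range
  rintro ⟨i, rfl⟩
  change (0:ℕ) ≠ 0 ∨ (i:ℕ) + 1 = 0 ∨ l + 1 ≤ (i:ℕ) + 1 at hq
  have := i.2
  rcases hq with h | h | h <;> omega

lemma finsum_eq_of_support_finset {M : Type*} [AddCommMonoid M] (f : ℕ → M) (s : Finset ℕ)
    (h : ∀ x, x ∉ s → f x = 0) : ∑ᶠ x, f x = ∑ x ∈ s, f x :=
  finsum_eq_sum_of_support_subset f (by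
    intro x hx
    by_contra hxs
    exact hx (h x hxs))

lemma net_embF_zero (d : Fin l →₀ ℕ) : net (embF l d) 0 = ∑ i : Fin l, (d i : ℤ) := by
  rw [net]
  have h1 : ∑ᶠ j : ℕ, (embF l d (0, j) : ℤ) = ∑ i : Fin l, (d i : ℤ) := by
    rw [finsum_eq_of_support_finset _ (Finset.range (l + 1)) (by
      intro x hx
      rw [Finset.mem_range] at hx
      rw [embF_apply_zero d (q := (0, x)) (by right; right; omega)]
      rfl)]
    rw [Finset.sum_range_succ']
    have e0 : (embF l d (0, 0) : ℤ) = 0 := by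
      rw [embF_apply_zero d (q := (0, 0)) (by right; left; rfl)]; rfl
    rw [e0, add_zero]
    rw [← Fin.sum_univ_eq_sum_range (fun m => (embF l d (0, m + 1) : ℤ)) l]
    apply Finset.sum_congr rfl
    intro i _
    rw [embF_apply_mem]
  have h2 : ∑ᶠ i : ℕ, (embF l d (i, 0) : ℤ) = 0 := by
    have : ∀ i : ℕ, (embF l d (i, 0) : ℤ) = 0 := by
      intro i
      rw [embF_apply_zero d (q := (i, 0)) (by right; left; rfl)]
      rfl
    simp only [this, finsum_zero]
  rw [h1, h2, sub_zero]

lemma net_embF_succ (d : Fin l →₀ ℕ) (j : ℕ) :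
    net (embF l d) (j + 1) = -(if h : j < l then (d ⟨j, h⟩ : ℤ) else 0) := by
  rw [net]
  have h1 : ∑ᶠ j' : ℕ, (embF l d (j + 1, j') : ℤ) = 0 := by
    have : ∀ j' : ℕ, (embF l d (j + 1, j') : ℤ) = 0 := by
      intro j'
      rw [embF_apply_zero d (q := (j + 1, j')) (by left; exact Nat.succ_ne_zero j)]
      rfl
    simp only [this, finsum_zero]
  have h2 : ∑ᶠ i : ℕ, (embF l d (i, j + 1) : ℤ)
      = (if h : j < l then (d ⟨j, h⟩ : ℤ) else 0) := by
    rw [finsum_eq_single _ 0 (by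
      intro i hi
      obtain ⟨i', rfl⟩ := Nat.exists_eq_succ_of_ne_zero hi
      rw [embF_apply_zero d (q := (i' + 1, j + 1)) (by left; exact Nat.succ_ne_zero i')]
      rfl)]
    by_cases h : j < l
    · rw [dif_pos h]
      exact_mod_cast embF_apply_mem d ⟨j, h⟩
    · rw [dif_neg h]
      rw [embF_apply_zero d (q := (0, j + 1)) (by right; right; omega)]
      rfl
  rw [h1, h2, zero_sub]

lemma rcoeff_embF (d : Fin l →₀ ℕ) :
    rcoeff (PsiSet l) ∅ (embF l d) = ∏ i : Fin l, cc (d i) := by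
  rw [rcoeff]
  refine Eq.trans (finprod_eq_finset_prod_of_mulSupport_subset _
    (s := (embF l d).support) ?_) ?_
  · intro q hq
    rw [Function.mem_mulSupport] at hq
    by_contra hs
    rw [← Finsupp.notMem_support_iff.1 (by simpa using hs)] at hq
    revert hq
    simp
  rw [embF, Finsupp.support_embDomain, Finset.prod_map]
  refine Eq.trans (Finset.prod_congr rfl (g := fun i => cc (d i)) fun i _ => ?_) ?_
  · have hmem : femb l i ∈ PsiSet l := ⟨rfl, Nat.succ_le_succ (Nat.zero_le _), i.2⟩
    rw [if_pos hmem, Finsupp.embDomain_apply_self]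
    rfl
  · apply Finset.prod_subset (Finset.subset_univ _)
    intro i _ hi
    rw [Finsupp.notMem_support_iff.1 hi]
    rfl

lemma mulSupport_wprod (p : ℤ) (ν : Fin l → ℤ) (d : Fin l →₀ ℕ) {k : ℕ} :
    Function.mulSupport (fun m => wC k (consVec p ν m + net (embF l d) m))
      ⊆ ((Finset.range (l + 1) : Finset ℕ) : Set ℕ) := by
  intro m hm
  rw [Function.mem_mulSupport] at hm
  by_contra hs
  simp only [Finset.coe_range, Set.mem_Iio, not_lt] at hs
  obtain ⟨j, rfl⟩ : ∃ j, m = j + 1 := ⟨m - 1, by omega⟩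
  rw [net_embF_succ, dif_neg (by omega), neg_zero, add_zero] at hm
  rw [consVec, if_neg (Nat.succ_ne_zero j), dif_neg (by omega)] at hm
  exact hm (wC_zero k)

lemma wprod_embF (p : ℤ) (ν : Fin l → ℤ) (d : Fin l →₀ ℕ) {k : ℕ} :
    ∏ᶠ m : ℕ, wC k (consVec p ν m + net (embF l d) m)
      = wC k (p + ∑ i : Fin l, (d i : ℤ)) * ∏ i : Fin l, wC k (ν i - d i) := by
  rw [finprod_eq_finset_prod_of_mulSupport_subset _ (mulSupport_wprod p ν d)]
  rw [Finset.prod_range_succ']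
  have e0 : consVec p ν 0 + net (embF l d) 0 = p + ∑ i : Fin l, (d i : ℤ) := by
    rw [net_embF_zero, consVec, if_pos rfl]
  rw [e0, mul_comm]
  congr 1
  have e1 : ∀ m ∈ Finset.range l,
      wC k (consVec p ν (m + 1) + net (embF l d) (m + 1))
        = (fun m => if h : m < l then wC k (ν ⟨m, h⟩ - d ⟨m, h⟩) else 1) m := by
    intro m hm
    rw [Finset.mem_range] at hm
    simp only
    rw [dif_pos hm, net_embF_succ, dif_pos hm, consVec, if_neg (Nat.succ_ne_zero m)]
    have : m + 1 - 1 = m := rfl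
    rw [this, dif_pos hm]
    ring_nf
  rw [Finset.prod_congr rfl e1,
    ← Fin.prod_univ_eq_prod_range (fun m => if h : m < l then wC k (ν ⟨m, h⟩ - d ⟨m, h⟩) else 1) l]
  apply Finset.prod_congr rfl
  intro i _
  rw [dif_pos i.2]

lemma rcoeff_psi_zero {n : (ℕ × ℕ) →₀ ℕ} (hn : ¬ (↑n.support ⊆ PsiSet l)) :
    rcoeff (PsiSet l) ∅ n = 0 := by
  rw [Set.not_subset] at hn
  obtain ⟨q, hq, hq2⟩ := hn
  rw [Finset.mem_coe, Finsupp.mem_support_iff] at hq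
  apply finprod_eq_zero _ q
  · rw [if_neg hq2, if_neg (Set.notMem_empty q), if_neg hq]
  · apply Set.Finite.subset (Finset.finite_toSet n.support)
    intro x hx
    rw [Function.mem_mulSupport] at hx
    by_contra hs
    rw [← Finsupp.notMem_support_iff.1 (by simpa using hs)] at hx
    revert hx
    simp

lemma embF_of_psi_supp {n : (ℕ × ℕ) →₀ ℕ} (hn : ↑n.support ⊆ PsiSet l) :
    ∃ d : Fin l →₀ ℕ, n = embF l d := by
  refine ⟨Finsupp.onFinset Finset.univ (fun i => n (0, (i : ℕ) + 1))
    (fun _ _ => Finset.mem_univ _), ?_⟩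
  ext q
  by_cases hq : ∃ i : Fin l, q = (0, (i : ℕ) + 1)
  · obtain ⟨i, rfl⟩ := hq
    rw [embF_apply_mem]
    rfl
  · have hn0 : n q = 0 := by
      by_contra h0
      have hmem := hn (Finset.mem_coe.2 (Finsupp.mem_support_iff.2 h0))
      simp only [PsiSet, Set.mem_setOf_eq] at hmem
      exact hq ⟨⟨q.2 - 1, by omega⟩, by
        obtain ⟨h1, h2, h3⟩ := hmem
        exact Prod.ext (by omega) (by simp; omega)⟩
    rw [hn0, embF_apply_zero]
    by_contra hc
    push_neg at hc
    obtain ⟨h1, h2, h3⟩ := hc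
    exact hq ⟨⟨q.2 - 1, by omega⟩, Prod.ext (by omega) (by simp; omega)⟩



lemma RApply_eval (k : ℕ) (p : ℤ) (ν : Fin l → ℤ) (T : ℕ)
    (hT : ∑ i : Fin l, (ν i).toNat < T) :
    RApply (PsiSet l) ∅ (wC k) (consVec p ν)
      = ∑ t ∈ Finset.range T, wC k (p + t) *
          PowerSeries.coeff t (∏ i : Fin l, psi k (ν i)) := by
  classical
  set S : Finset ((ℕ × ℕ) →₀ ℕ) := (Finset.range T).biUnion
    (fun t => (Finset.finsuppAntidiag (Finset.univ : Finset (Fin l)) t).image (embF l)) with hS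
  have hsupp : Function.support (fun n : (ℕ × ℕ) →₀ ℕ =>
      rcoeff (PsiSet l) ∅ n • ∏ᶠ m : ℕ, wC k (consVec p ν m + net n m)) ⊆ ↑S := by
    intro n hn
    rw [Function.mem_support] at hn
    have h1 : ↑n.support ⊆ PsiSet l := by
      by_contra hcon
      rw [rcoeff_psi_zero hcon, zero_smul] at hn
      exact hn rfl
    obtain ⟨d, rfl⟩ := embF_of_psi_supp h1
    have h2 : ∀ i : Fin l, d i ≤ (ν i).toNat := by
      intro i
      by_contra hcon
      rw [wprod_embF] at hn
      have hfac : wC k (ν i - d i) = 0 := wC_neg (by omega)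
      rw [Finset.prod_eq_zero (Finset.mem_univ i) hfac, mul_zero, smul_zero] at hn
      exact hn rfl
    rw [hS, Finset.mem_coe, Finset.mem_biUnion]
    refine ⟨∑ i : Fin l, d i, Finset.mem_range.2 ?_,
      Finset.mem_image.2 ⟨d, Finset.mem_finsuppAntidiag.2 ⟨rfl, Finset.subset_univ _⟩, rfl⟩⟩
    calc ∑ i : Fin l, d i ≤ ∑ i : Fin l, (ν i).toNat := Finset.sum_le_sum fun i _ => h2 i
      _ < T := hT
  rw [RApply, finsum_eq_sum_of_support_subset _ hsupp]
  have hdisj : Set.PairwiseDisjoint ↑(Finset.range T)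
      (fun t => (Finset.finsuppAntidiag (Finset.univ : Finset (Fin l)) t).image (embF l)) := by
    intro t1 _ t2 _ hne
    rw [Function.onFun, Finset.disjoint_left]
    intro n h1 h2
    rw [Finset.mem_image] at h1 h2
    obtain ⟨d1, hd1, rfl⟩ := h1
    obtain ⟨d2, hd2, he⟩ := h2
    have : d2 = d1 := Finsupp.embDomain_injective (femb l) he
    subst this
    rw [Finset.mem_finsuppAntidiag] at hd1 hd2
    exact hne (hd1.1 ▸ hd2.1 ▸ rfl)
  rw [hS, Finset.sum_biUnion hdisj]
  apply Finset.sum_congr rfl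
  intro t _
  have hinj : ∀ x ∈ Finset.finsuppAntidiag (Finset.univ : Finset (Fin l)) t,
      ∀ y ∈ Finset.finsuppAntidiag (Finset.univ : Finset (Fin l)) t,
      embF l x = embF l y → x = y :=
    fun d1 _ d2 _ h => Finsupp.embDomain_injective (femb l) h
  rw [Finset.sum_image hinj]
  rw [PowerSeries.coeff_prod, Finset.mul_sum]
  apply Finset.sum_congr rfl
  intro d hd
  rw [Finset.mem_finsuppAntidiag] at hd
  have hsum : ∑ i : Fin l, (d i : ℤ) = (t : ℤ) := by
    rw [← hd.1]
    push_cast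
    rfl
  rw [rcoeff_embF, wprod_embF, hsum]
  have e1 : ∀ i ∈ (Finset.univ : Finset (Fin l)),
      PowerSeries.coeff (d i) (psi k (ν i))
        = (cc (d i) : Cring k) * wC k (ν i - d i) := fun i _ => coeff_psi k (d i) (ν i)
  rw [Finset.prod_congr rfl e1, Finset.prod_mul_distrib, zsmul_eq_mul]
  push_cast
  ring





end Statement0Aux

/-- if `∑_ν a_ν w_ν = ∑_ν b_ν w_ν` in `C^(k)`, with `ν` ranging over integer
vectors of length `ℓ = ℓ(λ)`, then `∑_ν a_ν Ψ w_{(p,ν)} = ∑_ν b_ν Ψ w_{(p,ν)}` where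
`Ψ = ∏_{j=2}^{ℓ+1} (1-R_{1j})/(1+R_{1j})`. -/
theorem statement0 (k : ℕ) (hk : 0 < k) (lam : KStrict k) (p : ℤ)
    (a b : (Fin (plen lam.p) → ℤ) → ℤ)
    (ha : (Function.support a).Finite) (hb : (Function.support b).Finite)
    (h : ∑ᶠ ν : Fin (plen lam.p) → ℤ, a ν • ∏ i, wC k (ν i) =
         ∑ᶠ ν : Fin (plen lam.p) → ℤ, b ν • ∏ i, wC k (ν i)) :
    ∑ᶠ ν : Fin (plen lam.p) → ℤ,
        a ν • RApply (PsiSet (plen lam.p)) ∅ (wC k) (consVec p ν) =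
    ∑ᶠ ν : Fin (plen lam.p) → ℤ,
        b ν • RApply (PsiSet (plen lam.p)) ∅ (wC k) (consVec p ν) := by
  classical
  set s : Finset (Fin (plen lam.p) → ℤ) := ha.toFinset ∪ hb.toFinset with hs
  have hmema : ∀ ν : Fin (plen lam.p) → ℤ, a ν ≠ 0 → ν ∈ s := fun ν hν =>
    Finset.mem_union_left _ (ha.mem_toFinset.2 (Function.mem_support.2 hν))
  have hmemb : ∀ ν : Fin (plen lam.p) → ℤ, b ν ≠ 0 → ν ∈ s := fun ν hν =>
    Finset.mem_union_right _ (hb.mem_toFinset.2 (Function.mem_support.2 hν))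
  have hsupp : ∀ (c : (Fin (plen lam.p) → ℤ) → ℤ) (hc : ∀ ν, c ν ≠ 0 → ν ∈ s)
      (G : (Fin (plen lam.p) → ℤ) → Cring k),
      Function.support (fun ν => c ν • G ν) ⊆ ↑s := by
    intro c hc G ν hν
    rw [Function.mem_support] at hν
    refine Finset.mem_coe.2 (hc ν fun h0 => hν ?_)
    rw [h0, zero_smul]
  rw [finsum_eq_sum_of_support_subset _ (hsupp a hmema _),
    finsum_eq_sum_of_support_subset _ (hsupp b hmemb _)] at h
  rw [finsum_eq_sum_of_support_subset _ (hsupp a hmema _),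
    finsum_eq_sum_of_support_subset _ (hsupp b hmemb _)]
  obtain ⟨T, hTb⟩ : ∃ T : ℕ, ∀ ν ∈ s, ∑ i : Fin (plen lam.p), (ν i).toNat < T := by
    refine ⟨1 + ∑ ν ∈ s, ∑ i : Fin (plen lam.p), (ν i).toNat, fun ν hν => ?_⟩
    have hle := Finset.single_le_sum
      (f := fun ν : Fin (plen lam.p) → ℤ => ∑ i : Fin (plen lam.p), (ν i).toNat)
      (fun _ _ => Nat.zero_le _) hν
    exact Nat.lt_one_add_iff.2 hle
  have key : ∀ ν ∈ s, RApply (PsiSet (plen lam.p)) ∅ (wC k) (consVec p ν)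
      = ∑ t ∈ Finset.range T, wC k (p + t) *
          PowerSeries.coeff t (∏ i : Fin (plen lam.p), psi k (ν i)) := by
    intro ν hν
    exact RApply_eval k p ν T (hTb ν hν)
  have mid : ∀ c : (Fin (plen lam.p) → ℤ) → ℤ,
      ∑ ν ∈ s, c ν • ∑ t ∈ Finset.range T, wC k (p + t) *
          PowerSeries.coeff t (∏ i : Fin (plen lam.p), psi k (ν i))
        = ∑ t ∈ Finset.range T, wC k (p + t) *
          PowerSeries.coeff t
            (DeltaH k (∑ ν ∈ s, c ν • ∏ i : Fin (plen lam.p), wC k (ν i))) := by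
    intro c
    have hD : DeltaH k (∑ ν ∈ s, c ν • ∏ i : Fin (plen lam.p), wC k (ν i))
        = ∑ ν ∈ s, c ν • ∏ i : Fin (plen lam.p), psi k (ν i) := by
      rw [map_sum]
      apply Finset.sum_congr rfl
      intro ν _
      rw [map_zsmul, map_prod]
      congr 1
      exact Finset.prod_congr rfl fun i _ => DeltaH_wC k (ν i)
    rw [hD]
    have e2 : ∀ t ∈ Finset.range T,
        wC k (p + t) * PowerSeries.coeff t
            (∑ ν ∈ s, c ν • ∏ i : Fin (plen lam.p), psi k (ν i))
          = ∑ ν ∈ s, c ν • (wC k (p + t) *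
              PowerSeries.coeff t (∏ i : Fin (plen lam.p), psi k (ν i))) := by
      intro t _
      rw [map_sum, Finset.mul_sum]
      apply Finset.sum_congr rfl
      intro ν _
      rw [map_zsmul, mul_smul_comm]
    rw [Finset.sum_congr rfl e2, Finset.sum_comm]
    apply Finset.sum_congr rfl
    intro ν _
    rw [Finset.smul_sum]
  calc ∑ ν ∈ s, a ν • RApply (PsiSet (plen lam.p)) ∅ (wC k) (consVec p ν)
      = ∑ ν ∈ s, a ν • ∑ t ∈ Finset.range T, wC k (p + t) *
          PowerSeries.coeff t (∏ i : Fin (plen lam.p), psi k (ν i)) :=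
        Finset.sum_congr rfl fun ν hν => by rw [key ν hν]
    _ = ∑ t ∈ Finset.range T, wC k (p + t) * PowerSeries.coeff t
          (DeltaH k (∑ ν ∈ s, a ν • ∏ i : Fin (plen lam.p), wC k (ν i))) := mid a
    _ = ∑ t ∈ Finset.range T, wC k (p + t) * PowerSeries.coeff t
          (DeltaH k (∑ ν ∈ s, b ν • ∏ i : Fin (plen lam.p), wC k (ν i))) := by rw [h]
    _ = ∑ ν ∈ s, b ν • ∑ t ∈ Finset.range T, wC k (p + t) *
          PowerSeries.coeff t (∏ i : Fin (plen lam.p), psi k (ν i)) := (mid b).symm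
    _ = ∑ ν ∈ s, b ν • RApply (PsiSet (plen lam.p)) ∅ (wC k) (consVec p ν) :=
        Finset.sum_congr rfl fun ν hν => by rw [key ν hν]

end EtaP
end
end

section
/- Let λ be a typed k-strict partition and let H_λ(0; y) be obtained from the eta polynomial H_λ(x; y) by setting x_i = 0 for all i ≥ 1. Then H_λ(0; y) = 0 if λ_1 > k; H_λ(0; y) = s_{λ'}(y) if λ_1 = k and type(λ) = 1; H_λ(0; y) = 0 if λ_1 = k and type(λ) = 2; and H_λ(0; y) = s_{λ'}(y) if λ_1 < k, where λ' is the conjugate partition of λ and s_{λ'}(y) is the Schur polynomial in y = (y_1,…,y_k). -/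
noncomputable section
open scoped Classical

namespace EtaP

/-! ### Auxiliary lemmas for statement 5 -/

section Aux5

lemma qSer_neg {σ R : Type} [CommRing R] {r : ℤ} (hr : r < 0) : qSer σ R r = 0 := by
  apply MvPowerSeries.ext
  intro d
  rw [MvPowerSeries.coeff_apply, map_zero, qSer, if_neg]
  intro h
  omega

lemma qSer_zero (σ R : Type) [CommRing R] : qSer σ R 0 = 1 := by
  apply MvPowerSeries.ext
  intro d
  rw [MvPowerSeries.coeff_apply, MvPowerSeries.coeff_one, qSer]
  by_cases hd : d = 0
  · subst hd
    simp
  · rw [if_neg, if_neg hd]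
    intro h
    apply hd
    have h' : (d.sum fun _ n => n) = 0 := by exact_mod_cast h
    rw [Finsupp.sum] at h'
    ext a
    by_cases ha : a ∈ d.support
    · exact (Finset.sum_eq_zero_iff.1 h') a ha
    · simpa using Finsupp.notMem_support_iff.1 ha

lemma constantCoeff_qSer {σ R : Type} [CommRing R] (r : ℤ) :
    MvPowerSeries.constantCoeff (σ := σ) (R := R) (qSer σ R r) = if r = 0 then 1 else 0 := by
  rw [← MvPowerSeries.coeff_zero_eq_constantCoeff_apply, MvPowerSeries.coeff_apply, qSer]
  simp only [Finsupp.sum_zero_index, Finsupp.support_zero, Finset.card_empty, pow_zero]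
  by_cases h : r = 0
  · rw [if_pos (by omega), if_pos h]
  · rw [if_neg (by omega), if_neg h]

lemma esy_neg {k : ℕ} {r : ℤ} (h : r < 0) : esy k r = 0 := if_neg (by omega)

lemma esy_zero (k : ℕ) : esy k 0 = 1 := by
  rw [esy, if_pos le_rfl]
  simp [MvPolynomial.esymm_zero]

lemma esy_gt {k : ℕ} {r : ℤ} (h : (k : ℤ) < r) : esy k r = 0 := by
  rw [esy, if_pos (by omega), MvPolynomial.esymm,
    Finset.powersetCard_eq_empty.2 (by simp; omega), Finset.sum_empty]

lemma thetaSer_neg {k : ℕ} {σ : Type} {r : ℤ} (hr : r < 0) : thetaSer k σ r = 0 := by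
  rw [thetaSer]
  apply Finset.sum_eq_zero
  intro i _
  rw [qSer_neg (by omega), mul_zero]

lemma thetaSer_zero (k : ℕ) (σ : Type) : thetaSer k σ 0 = 1 := by
  rw [thetaSer, Finset.sum_eq_single_of_mem 0 (by simp)]
  · simp only [Nat.cast_zero, sub_zero, qSer_zero, mul_one]
    rw [esy_zero, map_one]
  · intro i _ hi
    rw [qSer_neg (by omega), mul_zero]

lemma constantCoeff_thetaSer (k : ℕ) (σ : Type) (r : ℤ) :
    MvPowerSeries.constantCoeff (σ := σ) (R := MvPolynomial (Fin k) ℚ) (thetaSer k σ r) = esy k r := by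
  rw [thetaSer, map_sum]
  have hterm : ∀ i ∈ Finset.range (k + 1),
      MvPowerSeries.constantCoeff (σ := σ) (R := MvPolynomial (Fin k) ℚ)
        (MvPowerSeries.C (σ := σ) (R := MvPolynomial (Fin k) ℚ) (esy k i) * qSer σ _ (r - i)) =
      if (i : ℤ) = r then esy k r else 0 := by
    intro i _
    rw [map_mul, MvPowerSeries.constantCoeff_C, constantCoeff_qSer]
    by_cases h : (i : ℤ) = r
    · rw [if_pos (by omega), if_pos h, h, mul_one]
    · rw [if_neg (by omega), if_neg h, mul_zero]
  rw [Finset.sum_congr rfl hterm]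
  by_cases hr : 0 ≤ r ∧ r ≤ (k : ℤ)
  · have hiff : ∀ i : ℕ, ((i : ℤ) = r) ↔ (i = r.toNat) := by omega
    simp only [hiff]
    rw [Finset.sum_ite_eq' (Finset.range (k + 1)) r.toNat (fun _ => esy k r),
      if_pos (by simp only [Finset.mem_range]; omega)]
  · rw [Finset.sum_eq_zero]
    · by_cases h0 : r < 0
      · exact (esy_neg h0).symm
      · exact (esy_gt (by omega)).symm
    · intro i hi
      rw [if_neg]
      simp only [Finset.mem_range] at hi
      omega

/-! #### Partition support lemmas -/

lemma part_zero_of_ge {lam : ℕ →₀ ℕ} (hmono : ∀ i j, i ≤ j → lam j ≤ lam i)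
    {m : ℕ} (hm : plen lam ≤ m) : lam m = 0 := by
  by_contra h
  have hsub : Finset.range (m + 1) ⊆ lam.support := by
    intro i hi
    rw [Finsupp.mem_support_iff]
    have := hmono i m (by simpa [Nat.lt_succ_iff] using hi)
    omega
  have := Finset.card_le_card hsub
  rw [Finset.card_range] at this
  have : m + 1 ≤ plen lam := this
  omega

lemma part_pos_of_lt {lam : ℕ →₀ ℕ} (hmono : ∀ i j, i ≤ j → lam j ≤ lam i)
    {m : ℕ} (hm : m < plen lam) : 0 < lam m := by
  by_contra h
  have hz : lam m = 0 := by omega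
  have hsub : lam.support ⊆ Finset.range m := by
    intro i hi
    rw [Finsupp.mem_support_iff] at hi
    rw [Finset.mem_range]
    by_contra hip
    have := hmono m i (by omega)
    omega
  have := Finset.card_le_card hsub
  rw [Finset.card_range] at this
  have : plen lam ≤ m := this
  omega

lemma lenk_eq_zero {k : ℕ} {lam : ℕ →₀ ℕ} (hmono : ∀ i j, i ≤ j → lam j ≤ lam i)
    (h : lam 0 ≤ k) : lenk k lam = 0 := by
  rw [lenk, Finset.card_eq_zero, Finset.filter_eq_empty_iff]
  intro i _
  have := hmono 0 i (Nat.zero_le i)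
  omega

lemma lenk_pos {k : ℕ} {lam : ℕ →₀ ℕ} (h : k < lam 0) : 0 < lenk k lam := by
  rw [lenk, Finset.card_pos]
  exact ⟨0, Finset.mem_filter.2 ⟨Finsupp.mem_support_iff.2 (by omega), h⟩⟩

/-! #### Indicator finsupps and degrees -/

/-- upper-triangular pairs with entries `< L`. -/
def UTL (L : ℕ) : Finset (ℕ × ℕ) :=
  (Finset.range L ×ˢ Finset.range L).filter fun p => p.1 < p.2

lemma mem_UTL {L : ℕ} {p : ℕ × ℕ} : p ∈ UTL L ↔ p.1 < p.2 ∧ p.2 < L := by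
  simp only [UTL, Finset.mem_filter, Finset.mem_product, Finset.mem_range]
  omega

/-- indicator finsupp of a finite set of pairs. -/
def indF (S : Finset (ℕ × ℕ)) : (ℕ × ℕ) →₀ ℕ :=
  Finsupp.indicator S fun _ _ => 1

lemma indF_apply (S : Finset (ℕ × ℕ)) (p : ℕ × ℕ) :
    indF S p = if p ∈ S then 1 else 0 := by
  by_cases h : p ∈ S
  · rw [if_pos h, indF, Finsupp.indicator_of_mem h]
  · rw [if_neg h, indF, Finsupp.indicator_of_notMem h]

lemma support_indF (S : Finset (ℕ × ℕ)) : (indF S).support = S := by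
  ext p
  rw [Finsupp.mem_support_iff, indF_apply]
  by_cases h : p ∈ S <;> simp [h]

lemma indF_injective : Function.Injective indF := by
  intro S T h
  rw [← support_indF S, ← support_indF T, h]

/-- out-degree of `m` in `S`. -/
def outd (S : Finset (ℕ × ℕ)) (m : ℕ) : ℕ := (S.filter fun p => p.1 = m).card

/-- in-degree of `m` in `S`. -/
def inde (S : Finset (ℕ × ℕ)) (m : ℕ) : ℕ := (S.filter fun p => p.2 = m).card

lemma finsum_indF_fst (S : Finset (ℕ × ℕ)) (m : ℕ) :
    (∑ᶠ j : ℕ, (indF S (m, j) : ℤ)) = outd S m := by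
  have hsupp : (Function.support fun j => (indF S (m, j) : ℤ)) ⊆
      ↑((S.filter fun p => p.1 = m).image Prod.snd) := by
    intro j hj
    simp only [Function.mem_support, ne_eq] at hj
    have : (m, j) ∈ S := by
      by_contra h
      rw [indF_apply, if_neg h] at hj
      simp at hj
    simp only [Finset.coe_image, Set.mem_image, Finset.mem_coe, Finset.mem_filter]
    exact ⟨(m, j), ⟨this, rfl⟩, rfl⟩
  rw [finsum_eq_sum_of_support_subset _ hsupp]
  rw [Finset.sum_congr rfl (fun j hj => ?_), Finset.sum_const, nsmul_eq_mul, mul_one]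
  · rw [outd, Finset.card_image_of_injOn]
    intro p hp q hq hpq
    simp only [Finset.mem_coe, Finset.mem_filter] at hp hq
    exact Prod.ext (hp.2.trans hq.2.symm) hpq
  · simp only [Finset.mem_image, Finset.mem_filter] at hj
    obtain ⟨p, ⟨hpS, hp1⟩, hp2⟩ := hj
    have : (m, j) ∈ S := by
      have : p = (m, j) := Prod.ext hp1 hp2
      rwa [← this]
    rw [indF_apply, if_pos this, Nat.cast_one]

lemma finsum_indF_snd (S : Finset (ℕ × ℕ)) (m : ℕ) :
    (∑ᶠ i : ℕ, (indF S (i, m) : ℤ)) = inde S m := by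
  have hsupp : (Function.support fun i => (indF S (i, m) : ℤ)) ⊆
      ↑((S.filter fun p => p.2 = m).image Prod.fst) := by
    intro i hi
    simp only [Function.mem_support, ne_eq] at hi
    have : (i, m) ∈ S := by
      by_contra h
      rw [indF_apply, if_neg h] at hi
      simp at hi
    simp only [Finset.coe_image, Set.mem_image, Finset.mem_coe, Finset.mem_filter]
    exact ⟨(i, m), ⟨this, rfl⟩, rfl⟩
  rw [finsum_eq_sum_of_support_subset _ hsupp]
  rw [Finset.sum_congr rfl (fun i hi => ?_), Finset.sum_const, nsmul_eq_mul, mul_one]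
  · rw [inde, Finset.card_image_of_injOn]
    intro p hp q hq hpq
    simp only [Finset.mem_coe, Finset.mem_filter] at hp hq
    exact Prod.ext hpq (hp.2.trans hq.2.symm)
  · simp only [Finset.mem_image, Finset.mem_filter] at hi
    obtain ⟨p, ⟨hpS, hp2⟩, hp1⟩ := hi
    have : (i, m) ∈ S := by
      have : p = (i, m) := Prod.ext hp1 hp2
      rwa [← this]
    rw [indF_apply, if_pos this, Nat.cast_one]

lemma net_indF (S : Finset (ℕ × ℕ)) (m : ℕ) :
    net (indF S) m = (outd S m : ℤ) - inde S m := by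
  rw [net, finsum_indF_fst, finsum_indF_snd]

lemma net_indF_of_ge {S : Finset (ℕ × ℕ)} {L : ℕ} (hS : S ⊆ UTL L) {m : ℕ}
    (hm : L ≤ m) : net (indF S) m = 0 := by
  rw [net_indF]
  have h1 : outd S m = 0 := by
    rw [outd, Finset.card_eq_zero, Finset.filter_eq_empty_iff]
    intro p hp
    have := mem_UTL.1 (hS hp)
    omega
  have h2 : inde S m = 0 := by
    rw [inde, Finset.card_eq_zero, Finset.filter_eq_empty_iff]
    intro p hp
    have := mem_UTL.1 (hS hp)
    omega
  rw [h1, h2]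
  simp

/-! #### General `net` bounds -/

lemma net_eq_zero_of_notmem (n : (ℕ × ℕ) →₀ ℕ) {m : ℕ}
    (hm : ∀ p ∈ n.support, p.1 ≠ m ∧ p.2 ≠ m) : net n m = 0 := by
  rw [net]
  have h1 : (∑ᶠ j : ℕ, (n (m, j) : ℤ)) = 0 := by
    apply finsum_eq_zero_of_forall_eq_zero
    intro j
    have : n (m, j) = 0 := by
      by_contra h
      exact (hm _ (Finsupp.mem_support_iff.2 h)).1 rfl
    simp [this]
  have h2 : (∑ᶠ i : ℕ, (n (i, m) : ℤ)) = 0 := by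
    apply finsum_eq_zero_of_forall_eq_zero
    intro i
    have : n (i, m) = 0 := by
      by_contra h
      exact (hm _ (Finsupp.mem_support_iff.2 h)).2 rfl
    simp [this]
  rw [h1, h2, sub_zero]

/-- a bound beyond which `net n` vanishes. -/
def bnd (n : (ℕ × ℕ) →₀ ℕ) : ℕ := (n.support.sup fun p => max p.1 p.2) + 1

lemma net_eq_zero_of_bnd_le (n : (ℕ × ℕ) →₀ ℕ) {m : ℕ} (h : bnd n ≤ m) :
    net n m = 0 := by
  apply net_eq_zero_of_notmem
  intro p hp
  have hle : max p.1 p.2 ≤ n.support.sup fun q : ℕ × ℕ => max q.1 q.2 := by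
    simpa using Finset.le_sup (f := fun q : ℕ × ℕ => max q.1 q.2) hp
  have h1 := le_max_left p.1 p.2
  have h2 := le_max_right p.1 p.2
  rw [bnd] at h
  omega

lemma mulSupport_factors {B : Type} [CommRing B] (f : ℤ → B) (hf0 : f 0 = 1)
    (α : ℕ → ℤ) (L : ℕ) (hαL : ∀ m, L ≤ m → α m = 0) (n : (ℕ × ℕ) →₀ ℕ) :
    (Function.mulSupport fun m => f (α m + net n m)) ⊆
      ↑(Finset.range (max L (bnd n))) := by
  intro m hm
  simp only [Finset.coe_range, Set.mem_Iio]
  by_contra h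
  push_neg at h
  rw [Function.mem_mulSupport, hαL m (by omega), net_eq_zero_of_bnd_le n (by omega)] at hm
  simp [hf0] at hm

/-! #### `rcoeff` analysis -/

lemma rcoeff_eq_prod (Dfull Done : Set (ℕ × ℕ)) (n : (ℕ × ℕ) →₀ ℕ) :
    rcoeff Dfull Done n = ∏ p ∈ n.support,
      (if p ∈ Dfull then (if n p = 0 then 1 else 2 * (-1 : ℤ) ^ (n p))
      else if p ∈ Done then (if n p = 0 then 1 else if n p = 1 then -1 else 0)
      else (if n p = 0 then 1 else 0)) := by
  rw [rcoeff]
  apply finprod_eq_prod_of_mulSupport_subset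
  intro p hp
  rw [Function.mem_mulSupport] at hp
  by_contra hns
  rw [Finset.mem_coe, Finsupp.mem_support_iff, not_not] at hns
  simp only [hns] at hp
  split_ifs at hp <;> simp_all

lemma rcoeff_UT_ne_zero {n : (ℕ × ℕ) →₀ ℕ} (h : rcoeff ∅ UT n ≠ 0) :
    (∀ p, n p ≤ 1) ∧ (∀ p, n p ≠ 0 → p ∈ UT) := by
  rw [rcoeff_eq_prod] at h
  have key : ∀ p, n p ≠ 0 → (p ∈ UT ∧ n p ≤ 1) := by
    intro p hp
    by_contra hc
    apply h
    have hmem : p ∈ n.support := Finsupp.mem_support_iff.2 hp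
    apply Finset.prod_eq_zero hmem
    rw [if_neg (Set.notMem_empty p)]
    by_cases hUT : p ∈ UT
    · have h2 : ¬ n p ≤ 1 := fun hle => hc ⟨hUT, hle⟩
      rw [if_pos hUT, if_neg hp, if_neg (by omega)]
    · rw [if_neg hUT, if_neg hp]
  constructor
  · intro p
    by_cases hp : n p = 0
    · omega
    · exact (key p hp).2
  · intro p hp
    exact (key p hp).1

lemma eq_indF_of_le_one {n : (ℕ × ℕ) →₀ ℕ} (h : ∀ p, n p ≤ 1) :
    n = indF n.support := by
  ext p
  rw [indF_apply]
  by_cases hp : n p = 0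
  · rw [if_neg (by rwa [Finsupp.mem_support_iff, not_not]), hp]
  · rw [if_pos (Finsupp.mem_support_iff.2 hp)]
    have := h p
    omega

lemma rcoeff_indF {S : Finset (ℕ × ℕ)} (hS : ↑S ⊆ UT) :
    rcoeff ∅ UT (indF S) = (-1 : ℤ) ^ S.card := by
  rw [rcoeff_eq_prod, support_indF]
  rw [Finset.prod_congr rfl (fun p hp => ?_), Finset.prod_const]
  rw [if_neg (Set.notMem_empty p), if_pos (hS hp), indF_apply, if_pos hp]
  norm_num

/-! #### Vanishing of out-of-range terms -/

lemma finprod_vanish {B : Type} [CommRing B] (f : ℤ → B) (hf0 : f 0 = 1)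
    (hfneg : ∀ r : ℤ, r < 0 → f r = 0) (α : ℕ → ℤ) (L : ℕ)
    (hαL : ∀ m, L ≤ m → α m = 0)
    (S : Finset (ℕ × ℕ)) (hS : ↑S ⊆ UT) (hbig : ∃ p ∈ S, L ≤ p.2) :
    (∏ᶠ m : ℕ, f (α m + net (indF S) m)) = 0 := by
  obtain ⟨p0, hp0S, hp0⟩ := hbig
  have hne : (S.image Prod.snd).Nonempty := ⟨p0.2, Finset.mem_image_of_mem _ hp0S⟩
  set M := (S.image Prod.snd).max' hne with hM
  have hMmem : M ∈ S.image Prod.snd := Finset.max'_mem _ _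
  have hMmax : ∀ j ∈ S.image Prod.snd, j ≤ M := fun j hj => Finset.le_max' _ j hj
  have hML : L ≤ M := le_trans hp0 (hMmax _ (Finset.mem_image_of_mem _ hp0S))
  have hout : outd S M = 0 := by
    rw [outd, Finset.card_eq_zero, Finset.filter_eq_empty_iff]
    intro q hq hq1
    have h1 : q.1 < q.2 := hS hq
    have h2 : q.2 ≤ M := hMmax _ (Finset.mem_image_of_mem _ hq)
    omega
  have hin : 0 < inde S M := by
    rw [inde, Finset.card_pos]
    obtain ⟨q, hqS, hq2⟩ := Finset.mem_image.1 hMmem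
    exact ⟨q, Finset.mem_filter.2 ⟨hqS, hq2⟩⟩
  apply finprod_eq_zero _ M
  · rw [hαL M hML, net_indF, hout]
    apply hfneg
    push_cast
    omega
  · apply Set.Finite.subset (Finset.finite_toSet (Finset.range (max L (bnd (indF S)))))
    exact mulSupport_factors f hf0 α L hαL _

lemma mem_UT_iff {p : ℕ × ℕ} : p ∈ UT ↔ p.1 < p.2 := Iff.rfl

lemma constantCoeff_RApply_UT (k L : ℕ) (α : ℕ → ℤ)
    (hαL : ∀ m, L ≤ m → α m = 0) :
    MvPowerSeries.constantCoeff (σ := ℕ) (R := MvPolynomial (Fin k) ℚ)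
      (RApply ∅ UT (thetaSer k ℕ) α) =
    ∑ S ∈ (UTL L).powerset,
      (-1 : ℤ) ^ S.card • ∏ m ∈ Finset.range L, esy k (α m + net (indF S) m) := by
  rw [RApply]
  set g := fun n : (ℕ × ℕ) →₀ ℕ =>
    rcoeff ∅ UT n • ∏ᶠ m : ℕ, thetaSer k ℕ (α m + net n m) with hg
  have hsupp : Function.support g ⊆ ↑((UTL L).powerset.image indF) := by
    intro n hn
    rw [Function.mem_support] at hn
    have hrc : rcoeff ∅ UT n ≠ 0 := by
      intro h
      apply hn
      rw [hg]
      simp only [h, zero_smul]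
    obtain ⟨hle, hUT⟩ := rcoeff_UT_ne_zero hrc
    have hn_eq : n = indF n.support := eq_indF_of_le_one hle
    have hSUT : ↑n.support ⊆ UT := by
      intro p hp
      exact hUT p (Finsupp.mem_support_iff.1 hp)
    have hSL : n.support ⊆ UTL L := by
      intro p hp
      rw [mem_UTL]
      have h1 : p.1 < p.2 := hSUT hp
      refine ⟨h1, ?_⟩
      by_contra h2
      apply hn
      have hz : (∏ᶠ m : ℕ, thetaSer k ℕ (α m + net n m)) = 0 := by
        conv_lhs => rw [hn_eq]
        exact finprod_vanish _ (thetaSer_zero k ℕ) (fun r hr => thetaSer_neg hr)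
          α L hαL n.support hSUT ⟨p, hp, by omega⟩
      rw [hg]
      simp only [hz, smul_zero]
    simp only [Finset.coe_image, Set.mem_image, Finset.mem_coe, Finset.mem_powerset]
    exact ⟨n.support, hSL, hn_eq.symm⟩
  rw [finsum_eq_sum_of_support_subset _ hsupp,
    Finset.sum_image (fun S _ T _ h => indF_injective h), map_sum]
  apply Finset.sum_congr rfl
  intro S hS
  rw [Finset.mem_powerset] at hS
  have hSUT : ↑S ⊆ UT := by
    intro p hp
    exact (mem_UTL.1 (hS hp)).1
  rw [hg]
  simp only
  rw [map_zsmul, rcoeff_indF hSUT]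
  congr 1
  have hms : (Function.mulSupport fun m => thetaSer k ℕ (α m + net (indF S) m)) ⊆
      ↑(Finset.range L) := by
    intro m hm
    rw [Function.mem_mulSupport] at hm
    simp only [Finset.coe_range, Set.mem_Iio]
    by_contra h
    push_neg at h
    rw [hαL m h, net_indF_of_ge hS h] at hm
    simp [thetaSer_zero] at hm
  rw [finprod_eq_prod_of_mulSupport_subset _ hms, map_prod]
  exact Finset.prod_congr rfl fun m _ => constantCoeff_thetaSer k ℕ _

lemma rcoeff_supp_sub {Dfull Done : Set (ℕ × ℕ)} {n : (ℕ × ℕ) →₀ ℕ}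
    (h : rcoeff Dfull Done n ≠ 0) : ∀ p, n p ≠ 0 → p ∈ Dfull ∪ Done := by
  intro p hp
  by_contra hc
  rw [Set.mem_union] at hc
  push_neg at hc
  apply h
  rw [rcoeff_eq_prod]
  apply Finset.prod_eq_zero (Finsupp.mem_support_iff.2 hp)
  rw [if_neg hc.1, if_neg hc.2, if_neg hp]

/-- if `λ₁ > k`, the constant term of any raising-operator expression in the ϑ's vanishes. -/
lemma constantCoeff_RApply_zero (k L : ℕ) (Dfull Done : Set (ℕ × ℕ))
    (hsub : Dfull ∪ Done ⊆ UT) (α : ℕ → ℤ)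
    (hαL : ∀ m, L ≤ m → α m = 0) (h0 : (k : ℤ) < α 0) :
    MvPowerSeries.constantCoeff (σ := ℕ) (R := MvPolynomial (Fin k) ℚ)
      (RApply Dfull Done (thetaSer k ℕ) α) = 0 := by
  rw [RApply]
  set g := fun n : (ℕ × ℕ) →₀ ℕ =>
    rcoeff Dfull Done n • ∏ᶠ m : ℕ, thetaSer k ℕ (α m + net n m) with hg
  by_cases hfin : (Function.support g).Finite
  · rw [finsum_eq_sum _ hfin, map_sum]
    apply Finset.sum_eq_zero
    intro n _
    rw [hg]
    simp only
    rw [map_zsmul]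
    by_cases hrc : rcoeff Dfull Done n = 0
    · rw [hrc]
      simp
    · have hUT : ∀ p, n p ≠ 0 → p ∈ UT := fun p hp => hsub (rcoeff_supp_sub hrc p hp)
      have hzero : ∀ i, n (i, 0) = 0 := by
        intro i
        by_contra h
        have := hUT _ h
        rw [mem_UT_iff] at this
        simp at this
      have hnet : 0 ≤ net n 0 := by
        rw [net]
        have h2 : (∑ᶠ i : ℕ, (n (i, 0) : ℤ)) = 0 := by
          apply finsum_eq_zero_of_forall_eq_zero
          intro i
          rw [hzero i]
          simp
        rw [h2, sub_zero]
        exact finsum_nonneg fun j => by positivity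
      have hms := mulSupport_factors (thetaSer k ℕ) (thetaSer_zero k ℕ) α L hαL n
      rw [finprod_eq_prod_of_mulSupport_subset _ hms, map_prod]
      have hz : MvPowerSeries.constantCoeff (σ := ℕ) (R := MvPolynomial (Fin k) ℚ)
          (thetaSer k ℕ (α 0 + net n 0)) = 0 := by
        rw [constantCoeff_thetaSer]
        exact esy_gt (by omega)
      have h0mem : (0 : ℕ) ∈ Finset.range (max L (bnd n)) := by
        rw [Finset.mem_range, bnd]
        omega
      have hzz : (∏ x ∈ Finset.range (max L (bnd n)),
          MvPowerSeries.constantCoeff (σ := ℕ) (R := MvPolynomial (Fin k) ℚ)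
            (thetaSer k ℕ (α x + net n x))) = 0 := Finset.prod_eq_zero h0mem hz
      rw [hzz, smul_zero]
  · rw [finsum_of_infinite_support hfin, map_zero]

/-! #### The Jacobi–Trudi identity via the Vandermonde determinant -/

open MvPolynomial in
lemma prod_X_pow_map {ι : Type} (s : Finset ι) (h : ι → ℕ) (e : ι → ℕ) :
    (∏ i ∈ s, (X (h i) : MvPolynomial ℕ ℤ) ^ (e i)) =
    monomial (∑ i ∈ s, Finsupp.single (h i) (e i)) 1 := by
  rw [monomial_sum_one]
  exact Finset.prod_congr rfl fun i _ => X_pow_eq_monomial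

open MvPolynomial in
lemma prod_X_map {ι : Type} (s : Finset ι) (h : ι → ℕ) :
    (∏ p ∈ s, (X (h p) : MvPolynomial ℕ ℤ)) =
    monomial (∑ p ∈ s, Finsupp.single (h p) 1) 1 := by
  rw [monomial_sum_one]
  exact Finset.prod_congr rfl fun i _ => rfl

lemma inde_UTL {L m : ℕ} (hm : m < L) : inde (UTL L) m = m := by
  rw [inde]
  have heq : (UTL L).filter (fun p => p.2 = m) =
      (Finset.range m).image (fun i => (i, m)) := by
    ext p
    simp only [Finset.mem_filter, mem_UTL, Finset.mem_image, Finset.mem_range]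
    constructor
    · rintro ⟨⟨h1, h2⟩, h3⟩
      exact ⟨p.1, by omega, Prod.ext rfl h3.symm⟩
    · rintro ⟨i, hi, rfl⟩
      exact ⟨⟨by omega, by omega⟩, rfl⟩
  rw [heq, Finset.card_image_of_injective _
    (fun a b h => by simpa using congrArg Prod.fst h), Finset.card_range]

lemma inde_le_and_sdiff {L : ℕ} {S : Finset (ℕ × ℕ)} (hS : S ⊆ UTL L) {m : ℕ}
    (hm : m < L) :
    inde S m ≤ m ∧ inde (UTL L \ S) m = m - inde S m := by
  have hsub : S.filter (fun p => p.2 = m) ⊆ (UTL L).filter (fun p => p.2 = m) :=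
    Finset.filter_subset_filter _ hS
  have hle : inde S m ≤ m := by
    have h := Finset.card_le_card hsub
    have h2 : inde S m ≤ inde (UTL L) m := h
    rwa [inde_UTL hm] at h2
  refine ⟨hle, ?_⟩
  have hfil : (UTL L \ S).filter (fun p => p.2 = m) =
      (UTL L).filter (fun p => p.2 = m) \ S.filter (fun p => p.2 = m) := by
    ext p
    simp only [Finset.mem_filter, Finset.mem_sdiff]
    tauto
  show (Finset.filter (fun p => p.2 = m) (UTL L \ S)).card
      = m - (Finset.filter (fun p => p.2 = m) S).card
  rw [hfil, Finset.card_sdiff_of_subset hsub]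
  have hU : (Finset.filter (fun p => p.2 = m) (UTL L)).card = m := inde_UTL hm
  rw [hU]

lemma b1_apply {L : ℕ} {S : Finset (ℕ × ℕ)} (hS : S ⊆ UTL L) {m : ℕ} (hm : m < L) :
    ((∑ p ∈ S, Finsupp.single p.1 1 + ∑ p ∈ UTL L \ S, Finsupp.single p.2 1 : ℕ →₀ ℕ)) m
      = outd S m + (m - inde S m) := by
  rw [Finsupp.add_apply, Finset.sum_apply', Finset.sum_apply']
  have h1 : (∑ p ∈ S, Finsupp.single p.1 1 m) = outd S m := by
    rw [outd, Finset.card_filter]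
    exact Finset.sum_congr rfl fun p _ => Finsupp.single_apply
  have h2 : (∑ p ∈ UTL L \ S, Finsupp.single p.2 1 m) = inde (UTL L \ S) m := by
    rw [inde, Finset.card_filter]
    exact Finset.sum_congr rfl fun p _ => Finsupp.single_apply
  rw [h1, h2, (inde_le_and_sdiff hS hm).2]

lemma b2_apply {L : ℕ} (σ : Equiv.Perm (Fin L)) (j : Fin L) :
    ((∑ i : Fin L, Finsupp.single ((σ i : ℕ)) ((i : ℕ)) : ℕ →₀ ℕ)) (j : ℕ)
      = ((σ⁻¹ j : Fin L) : ℕ) := by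
  rw [Finset.sum_apply', Finset.sum_eq_single (σ⁻¹ j)]
  · rw [Finsupp.single_apply, if_pos (by simp)]
  · intro i _ hi
    rw [Finsupp.single_apply, if_neg]
    intro h
    apply hi
    have h2 : σ i = j := Fin.val_injective h
    rw [← h2, Equiv.Perm.inv_def, Equiv.symm_apply_apply]
  · simp

open MvPolynomial in
lemma expand_T (L : ℕ) :
    (∏ p ∈ UTL L, ((X p.2 : MvPolynomial ℕ ℤ) - X p.1)) =
    ∑ S ∈ (UTL L).powerset, (-1 : ℤ) ^ S.card •
      monomial (∑ p ∈ S, Finsupp.single p.1 1 +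
        ∑ p ∈ UTL L \ S, Finsupp.single p.2 1) 1 := by
  have hstep : ∀ p : ℕ × ℕ, ((X p.2 : MvPolynomial ℕ ℤ) - X p.1) =
      (fun q : ℕ × ℕ => -(X q.1 : MvPolynomial ℕ ℤ)) p +
      (fun q : ℕ × ℕ => (X q.2 : MvPolynomial ℕ ℤ)) p := by
    intro p
    simp only
    ring
  rw [Finset.prod_congr rfl (fun p _ => hstep p), Finset.prod_add]
  apply Finset.sum_congr rfl
  intro S hS
  have hneg : (∏ p ∈ S, (-(X p.1 : MvPolynomial ℕ ℤ))) =
      (-1 : ℤ) ^ S.card • ∏ p ∈ S, (X p.1 : MvPolynomial ℕ ℤ) := by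
    rw [Finset.prod_congr rfl
        (fun p _ => (neg_one_mul (X p.1 : MvPolynomial ℕ ℤ)).symm),
      Finset.prod_mul_distrib, Finset.prod_const, zsmul_eq_mul]
    push_cast
    ring
  rw [hneg, smul_mul_assoc, prod_X_map, prod_X_map, monomial_mul, one_mul]

open MvPolynomial in
lemma expand_T' (L : ℕ) :
    (∏ p ∈ UTL L, ((X p.2 : MvPolynomial ℕ ℤ) - X p.1)) =
    ∑ σ : Equiv.Perm (Fin L), (Equiv.Perm.sign σ : ℤ) •
      monomial (∑ i : Fin L, Finsupp.single ((σ i : ℕ)) ((i : ℕ))) 1 := by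
  have hT : (∏ p ∈ UTL L, ((X p.2 : MvPolynomial ℕ ℤ) - X p.1)) =
      ∏ i : Fin L, ∏ j ∈ Finset.Ioi i, ((X (j : ℕ) : MvPolynomial ℕ ℤ) - X (i : ℕ)) := by
    rw [UTL, Finset.prod_filter, Finset.prod_product, Finset.prod_range]
    apply Finset.prod_congr rfl
    intro i _
    rw [Finset.prod_range (fun j => if (i : ℕ) < j then
        ((X j : MvPolynomial ℕ ℤ) - X (i : ℕ)) else 1)]
    rw [show Finset.Ioi i = Finset.univ.filter (fun j => i < j) from by ext j; simp]
    rw [Finset.prod_filter]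
    apply Finset.prod_congr rfl
    intro j _
    by_cases h : i < j
    · rw [if_pos (by exact_mod_cast h), if_pos h]
    · rw [if_neg (by exact_mod_cast h), if_neg h]
  have hv := Matrix.det_vandermonde (fun i : Fin L => (X (i : ℕ) : MvPolynomial ℕ ℤ))
  rw [Matrix.det_apply] at hv
  rw [hT, ← hv]
  apply Finset.sum_congr rfl
  intro σ _
  rw [Units.smul_def]
  congr 1
  rw [← prod_X_pow_map Finset.univ (fun i : Fin L => ((σ i : ℕ))) (fun i : Fin L => (i : ℕ))]
  exact Finset.prod_congr rfl fun i _ => by rw [Matrix.vandermonde_apply]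

lemma poly_transfer_side {A : Type} [AddCommGroup A] {ι : Type} (s : Finset ι)
    (c : ι → ℤ) (b : ι → (ℕ →₀ ℕ)) (D : Finset (ℕ →₀ ℕ)) (hb : ∀ i ∈ s, b i ∈ D)
    (F : (ℕ →₀ ℕ) → A) :
    (∑ i ∈ s, c i • F (b i)) = ∑ β ∈ D,
      (MvPolynomial.coeff β (∑ i ∈ s, c i • MvPolynomial.monomial (b i) (1 : ℤ))) • F β := by
  have hco : ∀ β, MvPolynomial.coeff β
      (∑ i ∈ s, c i • MvPolynomial.monomial (b i) (1 : ℤ))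
      = ∑ i ∈ s, if b i = β then c i else 0 := by
    intro β
    rw [MvPolynomial.coeff_sum]
    apply Finset.sum_congr rfl
    intro i _
    rw [MvPolynomial.coeff_smul, MvPolynomial.coeff_monomial]
    simp only [smul_eq_mul, mul_ite, mul_one, mul_zero]
  calc (∑ i ∈ s, c i • F (b i))
      = ∑ i ∈ s, ∑ β ∈ D, (if b i = β then c i • F β else 0) := by
        apply Finset.sum_congr rfl
        intro i hi
        rw [Finset.sum_ite_eq D (b i) (fun β => c i • F β), if_pos (hb i hi)]
    _ = ∑ β ∈ D, ∑ i ∈ s, (if b i = β then c i • F β else 0) := Finset.sum_comm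
    _ = ∑ β ∈ D, (∑ i ∈ s, if b i = β then c i else 0) • F β := by
        apply Finset.sum_congr rfl
        intro β _
        rw [Finset.sum_smul]
        apply Finset.sum_congr rfl
        intro i _
        rw [ite_smul, zero_smul]
    _ = _ := by
        apply Finset.sum_congr rfl
        intro β _
        rw [hco β]

lemma poly_transfer {A : Type} [AddCommGroup A] {ι₁ ι₂ : Type} (s₁ : Finset ι₁)
    (s₂ : Finset ι₂) (c₁ : ι₁ → ℤ) (c₂ : ι₂ → ℤ) (b₁ : ι₁ → (ℕ →₀ ℕ))
    (b₂ : ι₂ → (ℕ →₀ ℕ))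
    (hpoly : (∑ i ∈ s₁, c₁ i • MvPolynomial.monomial (b₁ i) (1 : ℤ))
           = ∑ i ∈ s₂, c₂ i • MvPolynomial.monomial (b₂ i) (1 : ℤ))
    (F : (ℕ →₀ ℕ) → A) :
    (∑ i ∈ s₁, c₁ i • F (b₁ i)) = ∑ i ∈ s₂, c₂ i • F (b₂ i) := by
  set D : Finset (ℕ →₀ ℕ) := s₁.image b₁ ∪ s₂.image b₂ with hD
  rw [poly_transfer_side s₁ c₁ b₁ D
      (fun i hi => Finset.mem_union_left _ (Finset.mem_image_of_mem _ hi)) F,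
    poly_transfer_side s₂ c₂ b₂ D
      (fun i hi => Finset.mem_union_right _ (Finset.mem_image_of_mem _ hi)) F,
    hpoly]

lemma JT_core (k L : ℕ) (α : ℕ → ℤ) :
    (∑ S ∈ (UTL L).powerset,
      (-1 : ℤ) ^ S.card • ∏ m ∈ Finset.range L, esy k (α m + net (indF S) m))
    = (Matrix.of fun i j : Fin L => esy k (α i - i + j)).det := by
  set F : (ℕ →₀ ℕ) → MvPolynomial (Fin k) ℚ :=
    fun β => ∏ m ∈ Finset.range L, esy k (α m + (β m : ℤ) - m) with hF
  have htrans := poly_transfer (A := MvPolynomial (Fin k) ℚ)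
    ((UTL L).powerset) (Finset.univ : Finset (Equiv.Perm (Fin L)))
    (fun S => (-1 : ℤ) ^ S.card) (fun σ => (Equiv.Perm.sign σ : ℤ))
    (fun S => ∑ p ∈ S, Finsupp.single p.1 1 + ∑ p ∈ UTL L \ S, Finsupp.single p.2 1)
    (fun σ => ∑ i : Fin L, Finsupp.single ((σ i : ℕ)) ((i : ℕ)))
    (by rw [← expand_T, expand_T']) F
  calc (∑ S ∈ (UTL L).powerset,
      (-1 : ℤ) ^ S.card • ∏ m ∈ Finset.range L, esy k (α m + net (indF S) m))
      = ∑ S ∈ (UTL L).powerset, (-1 : ℤ) ^ S.card •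
          F (∑ p ∈ S, Finsupp.single p.1 1 + ∑ p ∈ UTL L \ S, Finsupp.single p.2 1) := by
        apply Finset.sum_congr rfl
        intro S hS
        rw [Finset.mem_powerset] at hS
        congr 1
        rw [hF]
        apply Finset.prod_congr rfl
        intro m hm
        rw [Finset.mem_range] at hm
        rw [b1_apply hS hm, net_indF]
        congr 1
        have := (inde_le_and_sdiff hS hm).1
        push_cast
        omega
    _ = ∑ σ : Equiv.Perm (Fin L), (Equiv.Perm.sign σ : ℤ) •
          F (∑ i : Fin L, Finsupp.single ((σ i : ℕ)) ((i : ℕ))) := htrans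
    _ = (Matrix.of fun i j : Fin L => esy k (α i - i + j)).det := by
        rw [Matrix.det_apply]
        apply Finset.sum_congr rfl
        intro σ _
        rw [Units.smul_def]
        congr 1
        simp only [hF]
        rw [Finset.prod_range (fun m => esy k (α m + ((∑ i : Fin L,
          Finsupp.single ((σ i : ℕ)) ((i : ℕ)) : ℕ →₀ ℕ) m : ℤ) - m))]
        simp only [b2_apply σ]
        exact Fintype.prod_equiv σ⁻¹ (fun j : Fin L =>
          esy k (α j + ((σ⁻¹ j : Fin L) : ℕ) - j))
          (fun i : Fin L => (Matrix.of fun i j : Fin L => esy k (α i - i + j)) (σ i) i)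
          (fun x => by
            simp only [Matrix.of_apply, Equiv.Perm.inv_def, Equiv.apply_symm_apply]
            ring_nf)

/-! #### Emptiness of the raising-operator index sets below the `k` threshold -/

lemma CsetP_empty {k : ℕ} {lam : ℕ →₀ ℕ} (hmono : ∀ i j, i ≤ j → lam j ≤ lam i)
    (h : lam 0 ≤ k) : CsetP k lam = ∅ := by
  ext p
  simp only [CsetP, Set.mem_setOf_eq, Set.mem_empty_iff_false, iff_false, not_and]
  intro h1 _
  have ha := hmono 0 p.1 (Nat.zero_le _)
  have hb := hmono 0 p.2 (Nat.zero_le _)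
  omega

lemma TCset_empty {k : ℕ} {lam : ℕ →₀ ℕ} (hmono : ∀ i j, i ≤ j → lam j ≤ lam i)
    (h : lam 0 ≤ k) : TCset k lam = ∅ := by
  ext p
  simp only [TCset, Set.mem_setOf_eq, Set.mem_empty_iff_false, iff_false, not_and]
  intro h1
  have ha := hmono 0 p.1 (Nat.zero_le _)
  have hb := hmono 0 p.2 (Nat.zero_le _)
  omega

lemma CsetP_sub_UT (k : ℕ) (lam : ℕ →₀ ℕ) : CsetP k lam ∪ (UT \ CsetP k lam) ⊆ UT := by
  intro p hp
  rcases hp with h | h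
  · exact h.1
  · exact h.1

lemma TCset_sub_UT (k : ℕ) (lam : ℕ →₀ ℕ) : TCset k lam ∪ (UT \ TCset k lam) ⊆ UT := by
  intro p hp
  rcases hp with h | h
  · exact h.1
  · exact h.1

/-! #### `removeK` -/

lemma removeK_apply (k : ℕ) (lam : ℕ →₀ ℕ) (i : ℕ) :
    removeK k lam i = lam (if i < lenk k lam then i else i + 1) := by
  rw [removeK, Finsupp.comapDomain_apply]

lemma removeK_apply_of_lenk_zero {k : ℕ} {lam : ℕ →₀ ℕ} (h : lenk k lam = 0) (i : ℕ) :
    removeK k lam i = lam (i + 1) := by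
  rw [removeK_apply, h, if_neg (Nat.not_lt_zero i)]

lemma removeK_zero_of_pos {k : ℕ} {lam : ℕ →₀ ℕ} (h : 0 < lenk k lam) :
    removeK k lam 0 = lam 0 := by
  rw [removeK_apply, if_pos h]

lemma removeK_zero_of_ge {k : ℕ} {lam : ℕ →₀ ℕ}
    (hmono : ∀ i j, i ≤ j → lam j ≤ lam i) {m : ℕ} (h : plen lam ≤ m) :
    removeK k lam m = 0 := by
  rw [removeK_apply]
  apply part_zero_of_ge hmono
  split_ifs <;> omega

lemma plen_removeK {k : ℕ} {lam : ℕ →₀ ℕ} (hmono : ∀ i j, i ≤ j → lam j ≤ lam i)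
    (hlenk : lenk k lam = 0) (h0 : lam 0 ≠ 0) :
    plen (removeK k lam) = plen lam - 1 := by
  have hL : 1 ≤ plen lam := by
    rw [plen]
    exact Finset.card_pos.2 ⟨0, Finsupp.mem_support_iff.2 h0⟩
  rw [plen]
  have hsup : (removeK k lam).support = Finset.range (plen lam - 1) := by
    ext i
    rw [Finsupp.mem_support_iff, Finset.mem_range, removeK_apply_of_lenk_zero hlenk]
    constructor
    · intro h
      by_contra h2
      push_neg at h2
      exact h (part_zero_of_ge hmono (by omega))
    · intro h
      have := part_pos_of_lt hmono (show i + 1 < plen lam by omega)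
      omega
  rw [hsup, Finset.card_range]

/-! #### Constant coefficients of `Θ̂`, `Θ`, `Ĥ`, `H̃` -/

lemma constantCoeff_ThetaHat_schur {k : ℕ} {lam : ℕ →₀ ℕ}
    (hmono : ∀ i j, i ≤ j → lam j ≤ lam i) (h : lam 0 ≤ k) :
    MvPowerSeries.constantCoeff (σ := ℕ) (R := MvPolynomial (Fin k) ℚ) (ThetaHat k ℕ lam)
      = schurConjE k lam := by
  rw [ThetaHat, CsetP_empty hmono h, Set.diff_empty,
    constantCoeff_RApply_UT k (plen lam) _
      (fun m hm => by rw [part_zero_of_ge hmono hm]; simp),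
    JT_core, schurConjE]

lemma constantCoeff_ThetaT_schur {k : ℕ} {mu : ℕ →₀ ℕ}
    (hmono : ∀ i j, i ≤ j → mu j ≤ mu i) (h : mu 0 ≤ k) :
    MvPowerSeries.constantCoeff (σ := ℕ) (R := MvPolynomial (Fin k) ℚ) (ThetaT k ℕ mu)
      = schurConjE k mu := by
  rw [ThetaT, TCset_empty hmono h, Set.diff_empty,
    constantCoeff_RApply_UT k (plen mu) _
      (fun m hm => by rw [part_zero_of_ge hmono hm]; simp),
    JT_core, schurConjE]

lemma constantCoeff_EtaHat_schur {k : ℕ} {lam : ℕ →₀ ℕ}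
    (hmono : ∀ i j, i ≤ j → lam j ≤ lam i) (h : lam 0 ≤ k) :
    MvPowerSeries.constantCoeff (σ := ℕ) (R := MvPolynomial (Fin k) ℚ) (EtaHat k ℕ lam)
      = schurConjE k lam := by
  rw [EtaHat, map_mul, cq, MvPowerSeries.constantCoeff_C, lenk_eq_zero hmono h,
    constantCoeff_ThetaHat_schur hmono h]
  norm_num

lemma constantCoeff_EtaHat_zero {k : ℕ} {lam : ℕ →₀ ℕ}
    (hmono : ∀ i j, i ≤ j → lam j ≤ lam i) (h : k < lam 0) :
    MvPowerSeries.constantCoeff (σ := ℕ) (R := MvPolynomial (Fin k) ℚ) (EtaHat k ℕ lam) = 0 := by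
  rw [EtaHat, map_mul, ThetaHat,
    constantCoeff_RApply_zero k (plen lam) _ _ (CsetP_sub_UT k lam) _
      (fun m hm => by rw [part_zero_of_ge hmono hm]; simp)
      (by exact_mod_cast h), mul_zero]

lemma constantCoeff_EtaTilde_zero {k : ℕ} {lam : ℕ →₀ ℕ}
    (hmono : ∀ i j, i ≤ j → lam j ≤ lam i) (h : k < lam 0) :
    MvPowerSeries.constantCoeff (σ := ℕ) (R := MvPolynomial (Fin k) ℚ) (EtaTilde k ℕ lam) = 0 := by
  rw [EtaTilde]
  by_cases hpt : posType k lam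
  · rw [if_pos hpt, map_mul, map_mul, ThetaT,
      constantCoeff_RApply_zero k (plen lam) _ _ (TCset_sub_UT k _) _
        (fun m hm => by rw [removeK_zero_of_ge hmono hm]; simp)
        (by rw [removeK_zero_of_pos (lenk_pos h)]; exact_mod_cast h),
      mul_zero, mul_zero]
  · rw [if_neg hpt, map_zero]

lemma constantCoeff_EtaTilde_schur {k : ℕ} {lam : ℕ →₀ ℕ}
    (hmono : ∀ i j, i ≤ j → lam j ≤ lam i) (hk0 : 0 < k) (h : lam 0 = k) :
    MvPowerSeries.constantCoeff (σ := ℕ) (R := MvPolynomial (Fin k) ℚ) (EtaTilde k ℕ lam)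
      = esy k k * schurConjE k (removeK k lam) := by
  have hlenk : lenk k lam = 0 := lenk_eq_zero hmono (le_of_eq h)
  rw [EtaTilde, if_pos ⟨0, h⟩, map_mul, map_mul, cq, MvPowerSeries.constantCoeff_C,
    MvPowerSeries.constantCoeff_C, hlenk]
  have hmu_mono : ∀ i j, i ≤ j → removeK k lam j ≤ removeK k lam i := by
    intro i j hij
    rw [removeK_apply_of_lenk_zero hlenk, removeK_apply_of_lenk_zero hlenk]
    exact hmono _ _ (by omega)
  have hmu0 : removeK k lam 0 ≤ k := by
    rw [removeK_apply_of_lenk_zero hlenk]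
    calc lam 1 ≤ lam 0 := hmono 0 1 (by omega)
    _ ≤ k := le_of_eq h
  rw [constantCoeff_ThetaT_schur hmu_mono hmu0]
  norm_num

/-! #### First-row expansion of the dual Jacobi–Trudi determinant -/

lemma det_dim_congr {k a b : ℕ} (h : a = b) (f : ℕ → ℕ → MvPolynomial (Fin k) ℚ) :
    (Matrix.of fun i j : Fin a => f i j).det = (Matrix.of fun i j : Fin b => f i j).det := by
  subst h
  rfl

lemma det_first_row (k n : ℕ) (g : ℕ → ℤ) (hg : g 0 = k) :
    (Matrix.of fun i j : Fin (n + 1) => esy k (g i - i + j)).det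
      = esy k k * (Matrix.of fun i j : Fin n =>
          esy k (g ((i : ℕ) + 1) - ((i : ℕ) + 1) + ((j : ℕ) + 1))).det := by
  rw [Matrix.det_succ_row_zero, Finset.sum_eq_single 0]
  · have h00 : (Matrix.of fun i j : Fin (n + 1) => esy k (g i - i + j)) 0 0 = esy k k := by
      rw [Matrix.of_apply]
      norm_num [hg]
    rw [h00]
    have hsub : ((Matrix.of fun i j : Fin (n + 1) => esy k (g i - i + j)).submatrix
        Fin.succ (0 : Fin (n + 1)).succAbove) = (Matrix.of fun i j : Fin n =>
          esy k (g ((i : ℕ) + 1) - ((i : ℕ) + 1) + ((j : ℕ) + 1))) := by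
      funext i j
      simp only [Matrix.submatrix_apply, Matrix.of_apply, Fin.succAbove_zero, Fin.val_succ]
      congr 1 <;> push_cast <;> ring
    rw [hsub]
    simp
  · intro j _ hj
    have hj1 : 1 ≤ (j : ℕ) := by
      by_contra hc
      push_neg at hc
      have hc0 : (j : ℕ) = 0 := by omega
      exact hj (Fin.ext (by simp [hc0]))
    have hz : ((Matrix.of fun i j : Fin (n + 1) => esy k (g i - i + j)) 0 j) = 0 := by
      rw [Matrix.of_apply]
      apply esy_gt
      simp only [Fin.val_zero, Nat.cast_zero, sub_zero, hg]
      omega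
    rw [hz, mul_zero, zero_mul]
  · simp

lemma schur_expand {k : ℕ} {lam : ℕ →₀ ℕ} (hmono : ∀ i j, i ≤ j → lam j ≤ lam i)
    (hk0 : 0 < k) (h : lam 0 = k) :
    schurConjE k lam = esy k k * schurConjE k (removeK k lam) := by
  have hlenk : lenk k lam = 0 := lenk_eq_zero hmono (le_of_eq h)
  have h0 : lam 0 ≠ 0 := by omega
  have hL : 1 ≤ plen lam := by
    rw [plen]
    exact Finset.card_pos.2 ⟨0, Finsupp.mem_support_iff.2 h0⟩
  obtain ⟨n, hn⟩ : ∃ n, plen lam = n + 1 := ⟨plen lam - 1, by omega⟩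
  have hmu : plen (removeK k lam) = n := by
    rw [plen_removeK hmono hlenk h0, hn]
    omega
  calc schurConjE k lam
      = (Matrix.of fun i j : Fin (n + 1) =>
          esy k ((lam (i : ℕ) : ℤ) - (i : ℕ) + (j : ℕ))).det :=
        det_dim_congr hn (fun x y => esy k ((lam x : ℤ) - (x : ℤ) + (y : ℤ)))
    _ = esy k k * (Matrix.of fun i j : Fin n =>
          esy k ((lam ((i : ℕ) + 1) : ℤ) - ((i : ℕ) + 1) + ((j : ℕ) + 1))).det :=
        det_first_row k n (fun m => (lam m : ℤ))
          (by show ((lam 0 : ℕ) : ℤ) = (k : ℤ); exact_mod_cast h)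
    _ = esy k k * schurConjE k (removeK k lam) := by
        congr 1
        have e1 : schurConjE k (removeK k lam)
            = (Matrix.of fun i j : Fin n =>
                esy k ((removeK k lam (i : ℕ) : ℤ) - (i : ℕ) + (j : ℕ))).det :=
          det_dim_congr hmu (fun x y => esy k ((removeK k lam x : ℤ) - (x : ℤ) + (y : ℤ)))
        rw [e1]
        apply congrArg Matrix.det
        funext i j
        simp only [Matrix.of_apply]
        rw [removeK_apply_of_lenk_zero hlenk]
        push_cast
        ring_nf

end Aux5

/-- the constant term of `H_λ(x;y)` in the `x` variables:
`H_λ(0;y) = 0` if `λ₁ > k`, `s_{λ'}(y)` if `λ₁ = k` and `type(λ) = 1`, `0` if `λ₁ = k`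
and `type(λ) = 2`, and `s_{λ'}(y)` if `λ₁ < k`. -/
theorem statement5 (k : ℕ) (hk : 0 < k) (lam : TypedKS k) :
    (k < lam.p 0 →
      MvPowerSeries.coeff (R := MvPolynomial (Fin k) ℚ) 0 (Eta k ℕ lam) = 0) ∧
    (lam.p 0 = k → lam.t = 1 →
      MvPowerSeries.coeff (R := MvPolynomial (Fin k) ℚ) 0 (Eta k ℕ lam) = schurConjE k lam.p) ∧
    (lam.p 0 = k → lam.t = 2 →
      MvPowerSeries.coeff (R := MvPolynomial (Fin k) ℚ) 0 (Eta k ℕ lam) = 0) ∧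
    (lam.p 0 < k →
      MvPowerSeries.coeff (R := MvPolynomial (Fin k) ℚ) 0 (Eta k ℕ lam) = schurConjE k lam.p) := by
  have hmono := lam.mono
  refine ⟨?_, ?_, ?_, ?_⟩
  · intro h
    rw [MvPowerSeries.coeff_zero_eq_constantCoeff_apply, Eta]
    have hHat := constantCoeff_EtaHat_zero hmono h
    have hTil := constantCoeff_EtaTilde_zero hmono h
    by_cases ht0 : lam.t = 0
    · rw [if_pos ht0, hHat]
    · rw [if_neg ht0]
      by_cases ht1 : lam.t = 1
      · rw [if_pos ht1, map_mul, map_add, hHat, hTil, add_zero, mul_zero]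
      · rw [if_neg ht1, map_mul, map_sub, hHat, hTil, sub_zero, mul_zero]
  · intro h ht
    rw [MvPowerSeries.coeff_zero_eq_constantCoeff_apply, Eta, if_neg (by omega),
      if_pos ht, map_mul, map_add, constantCoeff_EtaHat_schur hmono (le_of_eq h),
      constantCoeff_EtaTilde_schur hmono hk h, ← schur_expand hmono hk h,
      cq, MvPowerSeries.constantCoeff_C]
    set S := schurConjE k lam.p
    calc (MvPolynomial.C (1/2 : ℚ) : MvPolynomial (Fin k) ℚ) * (S + S)
        = (MvPolynomial.C (1/2 : ℚ) + MvPolynomial.C (1/2 : ℚ)) * S := by ring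
      _ = S := by
          rw [← map_add]
          norm_num
  · intro h ht
    rw [MvPowerSeries.coeff_zero_eq_constantCoeff_apply, Eta, if_neg (by omega),
      if_neg (by omega), map_mul, map_sub, constantCoeff_EtaHat_schur hmono (le_of_eq h),
      constantCoeff_EtaTilde_schur hmono hk h, ← schur_expand hmono hk h,
      sub_self, mul_zero]
  · intro h
    have ht0 : lam.t = 0 := by
      by_contra ht
      obtain ⟨i, hi⟩ := lam.t_pos.1 ht
      have := hmono 0 i (Nat.zero_le i)
      omega
    rw [MvPowerSeries.coeff_zero_eq_constantCoeff_apply, Eta, if_pos ht0,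
      constantCoeff_EtaHat_schur hmono (le_of_lt h)]

end EtaP
end
end
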